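/- arXiv:2409.00881 — 4 statements merged into one kernel-verified Lean document; each statement's English description precedes it below -/
import Mathlib

section
/- Let E be an elliptic curve over ℚ, let n ≥ 2, and let k ∈ {1, 2, 3, 4}. If 2^k divides the field extension degree [ℚ(E[2^{n+1}]) : ℚ(E[2^n])], then 2^k divides [ℚ(E[2^{n+2}]) : ℚ(E[2^{n+1}])]. -/
/-!
Division fields of elliptic curves over `ℚ`, inside a fixed algebraic closure `Qbar` of `ℚ`.
An elliptic curve over `ℚ` is a Weierstrass curve `W : WeierstrassCurve ℚ` satisfying
`W.IsElliptic` (i.e. with nonvanishing discriminant).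
-/

open WeierstrassCurve IntermediateField

noncomputable section

/-- A fixed algebraic closure of `ℚ`. -/
abbrev Qbar : Type := AlgebraicClosure ℚ

open Classical in
/-- The `m`-division field `ℚ(E[m])` of a Weierstrass (elliptic) curve over `ℚ`: the subfield
of the fixed algebraic closure of `ℚ` generated over `ℚ` by the `x`- and `y`-coordinates of
the `m`-torsion points of the curve over `Qbar`. -/
def divisionField (W : WeierstrassCurve ℚ) (m : ℕ) : IntermediateField ℚ Qbar :=
  IntermediateField.adjoin ℚ
    {c : Qbar | ∃ (x y : Qbar) (h : (W.baseChange Qbar).toAffine.Nonsingular x y),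
      m • (WeierstrassCurve.Affine.Point.some x y h) = 0 ∧ (c = x ∨ c = y)}

/-- The Galois group `Gal(ℚ(E[m])/ℚ)` of the `m`-division field of `W` over `ℚ`. -/
abbrev divGal (W : WeierstrassCurve ℚ) (m : ℕ) : Type :=
  ↥(divisionField W m) ≃ₐ[ℚ] ↥(divisionField W m)

end

open Classical

attribute [local instance high] IntermediateField.algebra'

noncomputable instance qbarIntegral : Algebra.IsIntegral ℚ Qbar := by
  have h := (AlgebraicClosure.isAlgebraic ℚ)
  convert h.isIntegral
  · rfl
  · exact Subsingleton.elim _ _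

noncomputable instance qbarNormal : Normal ℚ Qbar := by
  have h : Normal ℚ (AlgebraicClosure ℚ) :=
    @IsAlgClosure.normal ℚ (AlgebraicClosure ℚ) _ _ (AlgebraicClosure.instAlgebra ℚ) _
  convert h

open WeierstrassCurve.Affine (Point)
open Polynomial

set_option maxHeartbeats 1000000
set_option synthInstance.maxHeartbeats 400000

namespace DivFieldProof

lemma some_eq_some {F : Type*} [Field F] {W : WeierstrassCurve.Affine F} {x₁ x₂ y₁ y₂ : F}
    {h₁ : W.Nonsingular x₁ y₁} {h₂ : W.Nonsingular x₂ y₂} (hx : x₁ = x₂) (hy : y₁ = y₂) :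
    WeierstrassCurve.Affine.Point.some _ _ h₁ = WeierstrassCurve.Affine.Point.some _ _ h₂ := by
  subst hx; subst hy; rfl

/-- Multiplication by 2 is surjective on points of a nonsingular Weierstrass curve over an
algebraically closed field. -/
lemma exists_two_smul_eq {F : Type*} [Field F] [IsAlgClosed F] {E : WeierstrassCurve F}
    (hΔ : E.Δ ≠ 0) (Q : E.toAffine.Point) : ∃ P : E.toAffine.Point, 2 • P = Q := by
  obtain (_ | @⟨a, b, ha⟩) := Q
  · exact ⟨0, smul_zero 2⟩
  have hq4 : ((X ^ 4 + C (-(4*a)) * X ^ 3 + C (-(E.b₄ + a * E.b₂)) * X ^ 2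
      + C (-(2 * E.b₆ + 2 * a * E.b₄)) * X + C (-(E.b₈ + a * E.b₆)) : F[X])).degree = 4 := by
    compute_degree!
  obtain ⟨x₀, hx₀⟩ := IsAlgClosed.exists_root _ (by rw [hq4]; exact fun h => by norm_num at h)
  have hq0 : x₀ ^ 4 - E.b₄ * x₀ ^ 2 - 2 * E.b₆ * x₀ - E.b₈
      = a * (4 * x₀ ^ 3 + E.b₂ * x₀ ^ 2 + 2 * E.b₄ * x₀ + E.b₆) := by
    have h := hx₀
    simp only [IsRoot.def, eval_add, eval_mul, eval_pow, eval_C, eval_X] at h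
    linear_combination h
  have hp2 : ((X ^ 2 + C (E.a₁ * x₀ + E.a₃) * X
      + C (-(x₀ ^ 3 + E.a₂ * x₀ ^ 2 + E.a₄ * x₀ + E.a₆)) : F[X])).degree = 2 := by
    compute_degree!
  obtain ⟨y₀, hy₀⟩ := IsAlgClosed.exists_root _ (by rw [hp2]; exact fun h => by norm_num at h)
  have hy0 : y₀ ^ 2 + (E.a₁ * x₀ + E.a₃) * y₀ - (x₀ ^ 3 + E.a₂ * x₀ ^ 2 + E.a₄ * x₀ + E.a₆) = 0 := by
    have h := hy₀
    simp only [IsRoot.def, eval_add, eval_mul, eval_pow, eval_C, eval_X] at h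
    linear_combination h
  have he : E.toAffine.Equation x₀ y₀ := by
    rw [WeierstrassCurve.Affine.equation_iff]
    linear_combination hy0
  have he' := (WeierstrassCurve.Affine.equation_iff _ _).mp he
  have h₀ := (E.toAffine.equation_iff_nonsingular_of_Δ_ne_zero hΔ).mp he
  have hv : y₀ ≠ E.toAffine.negY x₀ y₀ := by
    intro hbad
    rw [WeierstrassCurve.Affine.negY] at hbad
    have hΨ : 4 * x₀ ^ 3 + E.b₂ * x₀ ^ 2 + 2 * E.b₄ * x₀ + E.b₆ = 0 := by
      simp only [WeierstrassCurve.b₂, WeierstrassCurve.b₄, WeierstrassCurve.b₆]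
      linear_combination (2*y₀ + E.a₁*x₀ + E.a₃) * hbad - 4 * he'
    have hΦ : x₀ ^ 4 - E.b₄ * x₀ ^ 2 - 2 * E.b₆ * x₀ - E.b₈ = 0 := by
      rw [hq0, hΨ, mul_zero]
    apply hΔ
    have hb : 4 * E.b₈ - E.b₂ * E.b₆ + E.b₄ ^ 2 = 0 := by linear_combination E.b_relation
    show -E.b₂ ^ 2 * E.b₈ - 8 * E.b₄ ^ 3 - 27 * E.b₆ ^ 2 + 9 * E.b₂ * E.b₄ * E.b₆ = 0
    linear_combination (E.b₂^2 - 32*E.b₄ - 8*E.b₂*x₀ - 48*x₀^2) * hΦ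
      + (E.b₂*E.b₄ - 27*E.b₆ - 10*E.b₄*x₀ - E.b₂*x₀^2 + 12*x₀^3) * hΨ
      + (-8*E.b₄ - 2*E.b₂*x₀ - 12*x₀^2) * hb
  have hvne : (2 * y₀ + E.a₁ * x₀ + E.a₃) ≠ 0 := by
    intro h0
    apply hv
    rw [WeierstrassCurve.Affine.negY]
    linear_combination h0
  set L := E.toAffine.slope x₀ x₀ y₀ y₀ with hLdef
  have hLval : L = (3 * x₀ ^ 2 + 2 * E.a₂ * x₀ + E.a₄ - E.a₁ * y₀) / (2 * y₀ + E.a₁ * x₀ + E.a₃) := by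
    rw [hLdef, WeierstrassCurve.Affine.slope_of_Y_ne rfl hv, WeierstrassCurve.Affine.negY]
    congr 1
    ring
  have key : (3 * x₀ ^ 2 + 2 * E.a₂ * x₀ + E.a₄ - E.a₁ * y₀) ^ 2
      + E.a₁ * (3 * x₀ ^ 2 + 2 * E.a₂ * x₀ + E.a₄ - E.a₁ * y₀) * (2 * y₀ + E.a₁ * x₀ + E.a₃)
      - (E.a₂ + 2 * x₀) * (2 * y₀ + E.a₁ * x₀ + E.a₃) ^ 2
      = a * (2 * y₀ + E.a₁ * x₀ + E.a₃) ^ 2 := by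
    have hq0' := hq0
    simp only [WeierstrassCurve.b₂, WeierstrassCurve.b₄, WeierstrassCurve.b₆,
      WeierstrassCurve.b₈] at hq0'
    linear_combination hq0' + (-(E.a₁ ^ 2) - 4 * E.a₂ - 8 * x₀ - 4 * a) * he'
  have hL2 : L * (2 * y₀ + E.a₁ * x₀ + E.a₃) = 3 * x₀ ^ 2 + 2 * E.a₂ * x₀ + E.a₄ - E.a₁ * y₀ := by
    rw [hLval]; exact div_mul_cancel₀ _ hvne
  have hxadd : E.toAffine.addX x₀ x₀ L = a := by
    show L ^ 2 + E.a₁ * L - E.a₂ - x₀ - x₀ = a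
    apply mul_right_cancel₀ (pow_ne_zero 2 hvne)
    linear_combination (L * (2 * y₀ + E.a₁ * x₀ + E.a₃) + (3 * x₀ ^ 2 + 2 * E.a₂ * x₀ + E.a₄
      - E.a₁ * y₀) + E.a₁ * (2 * y₀ + E.a₁ * x₀ + E.a₃)) * hL2 + key
  have hdouble : (2 : ℕ) • WeierstrassCurve.Affine.Point.some _ _ h₀
      = WeierstrassCurve.Affine.Point.some _ _
        (WeierstrassCurve.Affine.nonsingular_add h₀ h₀ fun hxy => hv hxy.2) := by
    rw [two_smul]
    exact WeierstrassCurve.Affine.Point.add_self_of_Y_ne hv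
  have h₂ := WeierstrassCurve.Affine.nonsingular_add h₀ h₀ fun hxy => hv hxy.2
  rcases WeierstrassCurve.Affine.Y_eq_of_X_eq h₂.1 ha.1 hxadd with hy2 | hy2
  · exact ⟨WeierstrassCurve.Affine.Point.some _ _ h₀, by rw [hdouble]; exact some_eq_some hxadd hy2⟩
  · refine ⟨-WeierstrassCurve.Affine.Point.some _ _ h₀, ?_⟩
    rw [smul_neg, hdouble, WeierstrassCurve.Affine.Point.neg_some]
    refine some_eq_some hxadd ?_
    rw [hy2, hxadd, WeierstrassCurve.Affine.negY_negY]


/-- The 2-torsion of a Weierstrass curve over a field of characteristic zero is finite. -/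
lemma finite_two_torsion {F : Type*} [Field F] [CharZero F] (E : WeierstrassCurve F) :
    {P : E.toAffine.Point | 2 • P = 0}.Finite := by
  classical
  have hpoly : ((C 4 * X ^ 3 + C E.b₂ * X ^ 2 + C (2 * E.b₄) * X + C E.b₆ : F[X])).degree = 3 := by
    compute_degree!
  have hcubic : {x : F | 4 * x ^ 3 + E.b₂ * x ^ 2 + 2 * E.b₄ * x + E.b₆ = 0}.Finite := by
    have h := Polynomial.finite_setOf_isRoot
      (p := (C 4 * X ^ 3 + C E.b₂ * X ^ 2 + C (2 * E.b₄) * X + C E.b₆ : F[X]))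
      (fun h0 => by rw [h0] at hpoly; simp at hpoly)
    refine h.subset ?_
    intro x hx
    rw [Set.mem_setOf_eq] at hx
    simp only [Set.mem_setOf_eq, IsRoot.def, eval_add, eval_mul, eval_pow, eval_C, eval_X]
    linear_combination hx
  let f : E.toAffine.Point → Option (F × F) := fun P =>
    match P with
    | .zero => none
    | @WeierstrassCurve.Affine.Point.some _ _ _ x y _ => some (x, y)
  have hfinj : Function.Injective f := by
    rintro (_ | @⟨x₁, y₁, h₁⟩) (_ | @⟨x₂, y₂, h₂⟩) h <;> simp only [f] at h
    · rfl
    · cases h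
    · cases h
    · obtain ⟨hx, hy⟩ := Prod.mk.injEq .. ▸ Option.some.inj h
      exact some_eq_some hx hy
  have himg : {P : E.toAffine.Point | 2 • P = 0} ⊆
      f ⁻¹' (insert none ((fun x => some (x, -(E.a₁ * x + E.a₃) / 2)) '' 
        {x : F | 4 * x ^ 3 + E.b₂ * x ^ 2 + 2 * E.b₄ * x + E.b₆ = 0})) := by
    rintro (_ | @⟨x, y, hns⟩) hP
    · exact Set.mem_preimage.mpr (Set.mem_insert _ _)
    · rw [Set.mem_setOf_eq, two_smul] at hP
      have hy : y = E.toAffine.negY x y := by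
        by_contra hy
        exact WeierstrassCurve.Affine.Point.some_ne_zero _
          ((WeierstrassCurve.Affine.Point.add_self_of_Y_ne hy) ▸ hP)
      rw [WeierstrassCurve.Affine.negY] at hy
      have he := (WeierstrassCurve.Affine.equation_iff _ _).mp hns.1
      refine Set.mem_preimage.mpr (Set.mem_insert_iff.mpr (Or.inr ⟨x, ?_, ?_⟩))
      · simp only [Set.mem_setOf_eq, WeierstrassCurve.b₂, WeierstrassCurve.b₄,
          WeierstrassCurve.b₆]
        linear_combination (2 * y + E.a₁ * x + E.a₃) * hy - 4 * he
      · show some (x, _) = f (.some _ _ hns)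
        simp only [f]
        have : y = -(E.a₁ * x + E.a₃) / 2 := by
          rw [eq_div_iff (two_ne_zero (α := F))]
          linear_combination hy
        rw [this]
  exact Set.Finite.preimage hfinj.injOn
    ((Set.Finite.image _ hcubic).insert none) |>.subset himg

/-- 2-power torsion is finite. -/
lemma finite_two_pow_torsion {F : Type*} [Field F] [CharZero F] (E : WeierstrassCurve F) (m : ℕ) :
    {P : E.toAffine.Point | 2 ^ m • P = 0}.Finite := by
  induction m with
  | zero =>
    refine (Set.finite_singleton (0 : E.toAffine.Point)).subset ?_
    intro P hP
    simpa [pow_zero, one_smul] using hP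
  | succ m ih =>
    have h1 := finite_two_torsion E
    have key : {P : E.toAffine.Point | 2 ^ (m + 1) • P = 0} ⊆
        ⋃ Q ∈ {P : E.toAffine.Point | 2 ^ m • P = 0}, {P | 2 • P = Q} := by
      intro P hP
      refine Set.mem_biUnion (show 2 ^ m • (2 • P) = 0 from ?_) rfl
      rw [← mul_nsmul, ← pow_succ']
      exact hP
    refine Set.Finite.subset (Set.Finite.biUnion ih (fun Q _ => ?_)) key
    by_cases hne : {P : E.toAffine.Point | 2 • P = Q}.Nonempty
    · obtain ⟨P₀, hP₀⟩ := hne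
      refine (h1.image (fun P => P + P₀)).subset ?_
      intro P hP
      refine ⟨P - P₀, ?_, sub_add_cancel P P₀⟩
      rw [Set.mem_setOf_eq, smul_sub, hP, hP₀, sub_self]
    · rw [Set.not_nonempty_iff_eq_empty] at hne
      rw [hne]; exact Set.finite_empty



open WeierstrassCurve.Affine (Point)
open Polynomial

section Fields

variable (W : WeierstrassCurve ℚ)

def genSet (m : ℕ) : Set Qbar :=
  {c : Qbar | ∃ (x y : Qbar) (h : (W.baseChange Qbar).toAffine.Nonsingular x y),
      m • (WeierstrassCurve.Affine.Point.some _ _ h) = 0 ∧ (c = x ∨ c = y)}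

lemma divisionField_eq (m : ℕ) :
    divisionField W m = IntermediateField.adjoin ℚ (genSet W m) := rfl

lemma coords_mem {m : ℕ} {x y : Qbar} (h : (W.baseChange Qbar).toAffine.Nonsingular x y)
    (hm : m • (Point.some _ _ h) = 0) : x ∈ divisionField W m ∧ y ∈ divisionField W m :=
  ⟨subset_adjoin _ _ ⟨x, y, h, hm, Or.inl rfl⟩, subset_adjoin _ _ ⟨x, y, h, hm, Or.inr rfl⟩⟩

lemma divisionField_mono {m m' : ℕ} (h : m ∣ m') : divisionField W m ≤ divisionField W m' := by
  rw [divisionField_eq, divisionField_eq]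
  refine IntermediateField.adjoin_le_iff.mpr fun c hc => ?_
  obtain ⟨x, y, hns, hm, hxy⟩ := hc
  obtain ⟨d, rfl⟩ := h
  refine subset_adjoin _ _ ⟨x, y, hns, ?_, hxy⟩
  have hrw : (m * d) • Point.some _ _ hns = d • m • Point.some _ _ hns := by
    rw [mul_nsmul]
  rw [hrw, hm]
  exact nsmul_zero d

instance charZeroQbar : CharZero Qbar := inferInstance

lemma finite_genSet (m : ℕ) : (genSet W (2 ^ m)).Finite := by
  classical
  have hT := finite_two_pow_torsion (W.baseChange Qbar) m
  let fx : (W.baseChange Qbar).toAffine.Point → Qbar := fun P =>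
    match P with
    | .zero => 0
    | @Point.some _ _ _ x _ _ => x
  let fy : (W.baseChange Qbar).toAffine.Point → Qbar := fun P =>
    match P with
    | .zero => 0
    | @Point.some _ _ _ _ y _ => y
  refine ((hT.image fx).union (hT.image fy)).subset ?_
  rintro c ⟨x, y, hns, hm, hc | hc⟩
  · exact Or.inl ⟨Point.some _ _ hns, hm, hc.symm⟩
  · exact Or.inr ⟨Point.some _ _ hns, hm, hc.symm⟩

instance finiteDimensional_divisionField (m : ℕ) :
    FiniteDimensional ℚ (divisionField W (2 ^ m)) := by
  rw [divisionField_eq]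
  haveI : Finite (genSet W (2 ^ m)) := (finite_genSet W m).to_subtype
  exact IntermediateField.finiteDimensional_adjoin fun x _ => Algebra.IsIntegral.isIntegral x

lemma divisionField_stable (m : ℕ) (σ : Qbar ≃ₐ[ℚ] Qbar) :
    (divisionField W m).map ↑σ ≤ divisionField W m := by
  rw [divisionField_eq, IntermediateField.adjoin_map]
  refine IntermediateField.adjoin_le_iff.mpr ?_
  rintro c ⟨c₀, ⟨x, y, hns, hm, hc⟩, rfl⟩
  have hσP := Point.map_some (W' := W) (σ : Qbar →ₐ[ℚ] Qbar) hns
  have hm' : m • (Point.map (W' := W) (σ : Qbar →ₐ[ℚ] Qbar) (Point.some _ _ hns)) = 0 := by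
    rw [← map_nsmul, hm, map_zero]
  rw [hσP] at hm'
  rcases hc with rfl | rfl
  · exact subset_adjoin _ _ ⟨_, _, _, hm', Or.inl rfl⟩
  · exact subset_adjoin _ _ ⟨_, _, _, hm', Or.inr rfl⟩

instance normal_divisionField (m : ℕ) : Normal ℚ (divisionField W m) :=
  IntermediateField.normal_iff_forall_map_le'.mpr (divisionField_stable W m)

instance isGalois_divisionField (m : ℕ) : IsGalois ℚ (divisionField W (2 ^ m)) := by
  constructor

end Fields


noncomputable section Restricted

variable (W : WeierstrassCurve ℚ) (n : ℕ)

/-- The big division field `ℚ(E[2^(n+2)])`. -/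
def LF : IntermediateField ℚ Qbar := divisionField W (2 ^ (n + 2))

/-- Generators of the `2^m`-division field, seen inside `LF`. -/
def SL (m : ℕ) : Set ↥(LF W n) :=
  {c | ∃ (x y : ↥(LF W n)) (h : (W.baseChange ↥(LF W n)).toAffine.Nonsingular x y),
      2 ^ m • (Point.some _ _ h) = 0 ∧ (c = x ∨ c = y)}

/-- The `2^m`-division field as an intermediate field of `LF/ℚ`. -/
def ML (m : ℕ) : IntermediateField ℚ ↥(LF W n) := IntermediateField.adjoin ℚ (SL W n m)

/-- The inclusion of points over `LF` into points over `Qbar`. -/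
def mapPt : (W.baseChange ↥(LF W n)).toAffine.Point →+ (W.baseChange Qbar).toAffine.Point :=
  Point.map (W' := W) (LF W n).val

lemma mapPt_injective : Function.Injective (mapPt W n) :=
  Point.map_injective (W' := W) (LF W n).val

lemma mapPt_tors {m : ℕ} (P : (W.baseChange ↥(LF W n)).toAffine.Point) :
    2 ^ m • P = 0 ↔ 2 ^ m • (mapPt W n P) = 0 := by
  rw [← map_nsmul (mapPt W n)]
  exact ⟨fun h => by rw [h, map_zero], fun h => mapPt_injective W n (by rw [h, map_zero])⟩

lemma descend (P : (W.baseChange Qbar).toAffine.Point) (hP : 2 ^ (n + 2) • P = 0) :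
    ∃ P' : (W.baseChange ↥(LF W n)).toAffine.Point, mapPt W n P' = P := by
  obtain (_ | @⟨x, y, hns⟩) := P
  · exact ⟨0, map_zero _⟩
  · obtain ⟨hx, hy⟩ := coords_mem W hns hP
    have hns' : (W.baseChange ↥(LF W n)).toAffine.Nonsingular
        (⟨x, hx⟩ : ↥(LF W n)) (⟨y, hy⟩ : ↥(LF W n)) := by
      rw [← WeierstrassCurve.Affine.baseChange_nonsingular W.toAffine (LF W n).val.injective]
      exact hns
    refine ⟨Point.some _ _ hns', ?_⟩
    rw [mapPt, Point.map_some]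
    exact some_eq_some rfl rfl

lemma image_SL {m : ℕ} (hm : m ≤ n + 2) :
    (LF W n).val '' SL W n m = genSet W (2 ^ m) := by
  ext c
  constructor
  · rintro ⟨c₀, ⟨x, y, hns, htors, hc⟩, rfl⟩
    have hns' : (W.baseChange Qbar).toAffine.Nonsingular ((LF W n).val x) ((LF W n).val y) := by
      rw [WeierstrassCurve.Affine.baseChange_nonsingular W.toAffine (LF W n).val.injective]
      exact hns
    have htors' : 2 ^ m • Point.some _ _ hns' = 0 := by
      have := (mapPt_tors W n (Point.some _ _ hns)).mp htors
      rwa [mapPt, Point.map_some] at this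
    rcases hc with rfl | rfl
    · exact ⟨_, _, hns', htors', Or.inl rfl⟩
    · exact ⟨_, _, hns', htors', Or.inr rfl⟩
  · rintro ⟨x, y, hns, htors, hc⟩
    have htors2 : 2 ^ (n + 2) • Point.some _ _ hns = 0 := by
      obtain ⟨d, hd⟩ : 2 ^ m ∣ 2 ^ (n + 2) := pow_dvd_pow 2 hm
      rw [hd, mul_nsmul, htors]
      exact nsmul_zero d
    obtain ⟨P', hP'⟩ := descend W n _ htors2
    obtain (_ | @⟨x', y', hns'⟩) := P'
    · rw [show (Point.zero : (W.baseChange ↥(LF W n)).toAffine.Point) = 0 from rfl, map_zero] at hP'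
      exact absurd hP'.symm (Point.some_ne_zero hns)
    rw [mapPt, Point.map_some] at hP'
    obtain ⟨hx', hy'⟩ := Point.some.inj hP'
    have htors'' : 2 ^ m • Point.some _ _ hns' = 0 := by
      rw [mapPt_tors W n, mapPt, Point.map_some]
      have : 2 ^ m • Point.some _ _ (((WeierstrassCurve.Affine.baseChange_nonsingular W.toAffine (LF W n).val.injective) _ _).mpr hns')
          = (0 : (W.baseChange Qbar).toAffine.Point) ↔ 2 ^ m • Point.some _ _ hns = 0 := by
        constructor <;> intro h
        · rwa [show Point.some _ _ hns = Point.some _ _ (((WeierstrassCurve.Affine.baseChange_nonsingular W.toAffine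
            (LF W n).val.injective) _ _).mpr hns') from some_eq_some hx'.symm hy'.symm]
        · rwa [show Point.some _ _ (((WeierstrassCurve.Affine.baseChange_nonsingular W.toAffine (LF W n).val.injective) _ _).mpr hns')
            = Point.some _ _ hns from some_eq_some hx' hy']
      exact this.mpr htors
    rcases hc with rfl | rfl
    · exact ⟨x', ⟨x', y', hns', htors'', Or.inl rfl⟩, hx'⟩
    · exact ⟨y', ⟨x', y', hns', htors'', Or.inr rfl⟩, hy'⟩

lemma map_ML {m : ℕ} (hm : m ≤ n + 2) :
    (ML W n m).map (LF W n).val = divisionField W (2 ^ m) := by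
  rw [ML, IntermediateField.adjoin_map, image_SL W n hm, divisionField_eq]

lemma ML_top : ML W n (n + 2) = ⊤ := by
  refine eq_top_iff.mpr fun z _ => ?_
  have hz : (z : Qbar) ∈ (ML W n (n + 2)).map (LF W n).val := by
    rw [map_ML W n le_rfl]
    exact z.2
  obtain ⟨w, hw, hwz⟩ := hz
  have : w = z := Subtype.ext hwz
  exact this ▸ hw

lemma ML_mono {m m' : ℕ} (h : m ≤ m') : ML W n m ≤ ML W n m' := by
  refine IntermediateField.adjoin_le_iff.mpr fun c hc => ?_
  obtain ⟨x, y, hns, htors, hc⟩ := hc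
  refine subset_adjoin _ _ ⟨x, y, hns, ?_, hc⟩
  obtain ⟨d, hd⟩ : 2 ^ m ∣ 2 ^ m' := pow_dvd_pow 2 h
  rw [hd, mul_nsmul, htors]
  exact nsmul_zero d

end Restricted


noncomputable section GaloisAction

variable (W : WeierstrassCurve ℚ) (n : ℕ)

lemma map_pt_mul (σ τ : ↥(LF W n) ≃ₐ[ℚ] ↥(LF W n))
    (P : (W.baseChange ↥(LF W n)).toAffine.Point) :
    Point.map (W' := W) (σ * τ).toAlgHom P = Point.map (W' := W) σ.toAlgHom (Point.map (W' := W) τ.toAlgHom P) := by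
  rw [Point.map_map]
  rfl

lemma map_pt_one (P : (W.baseChange ↥(LF W n)).toAffine.Point) :
    Point.map (W' := W) (1 : ↥(LF W n) ≃ₐ[ℚ] ↥(LF W n)).toAlgHom P = P := by
  obtain (_ | @⟨x, y, hns⟩) := P
  · rfl
  · exact (Point.map_some (W' := W) _ hns).trans (some_eq_some rfl rfl)

lemma mem_fixingSubgroup_iff_pts (m : ℕ) (σ : ↥(LF W n) ≃ₐ[ℚ] ↥(LF W n)) :
    σ ∈ (ML W n m).fixingSubgroup ↔
      ∀ P : (W.baseChange ↥(LF W n)).toAffine.Point, 2 ^ m • P = 0 →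
        Point.map (W' := W) σ.toAlgHom P = P := by
  constructor
  · intro hσ P hP
    obtain (_ | @⟨x, y, hns⟩) := P
    · rfl
    · have hx : x ∈ ML W n m := subset_adjoin _ _ ⟨x, y, hns, hP, Or.inl rfl⟩
      have hy : y ∈ ML W n m := subset_adjoin _ _ ⟨x, y, hns, hP, Or.inr rfl⟩
      have hσx := ((ML W n m).mem_fixingSubgroup_iff σ).mp hσ x hx
      have hσy := ((ML W n m).mem_fixingSubgroup_iff σ).mp hσ y hy
      rw [Point.map_some]
      exact some_eq_some hσx hσy
  · intro hfix
    refine ((ML W n m).mem_fixingSubgroup_iff σ).mpr fun z hz => ?_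
    induction hz using IntermediateField.adjoin_induction with
    | mem c hc =>
      obtain ⟨x, y, hns, htors, hc⟩ := hc
      have hfixP := hfix (Point.some _ _ hns) htors
      rw [Point.map_some] at hfixP
      obtain ⟨hx, hy⟩ := Point.some.inj hfixP
      rcases hc with rfl | rfl
      · exact hx
      · exact hy
    | algebraMap x => exact σ.commutes x
    | add a b _ _ ha hb => rw [map_add, ha, hb]
    | inv a _ ha => rw [map_inv₀, ha]
    | mul a b _ _ ha hb => rw [map_mul, ha, hb]

lemma eq_one_of_fix_top {σ : ↥(LF W n) ≃ₐ[ℚ] ↥(LF W n)}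
    (hσ : σ ∈ (ML W n (n + 2)).fixingSubgroup) : σ = 1 := by
  refine AlgEquiv.ext fun z => ?_
  have hz : z ∈ ML W n (n + 2) := by rw [ML_top]; trivial
  exact ((ML W n (n + 2)).mem_fixingSubgroup_iff σ).mp hσ z hz

lemma algEquiv_ext_of_SL {σ τ : ↥(LF W n) ≃ₐ[ℚ] ↥(LF W n)}
    (h : ∀ c ∈ SL W n (n + 2), σ c = τ c) : σ = τ := by
  refine AlgEquiv.ext fun z => ?_
  have hz : z ∈ ML W n (n + 2) := by rw [ML_top]; trivial
  induction hz using IntermediateField.adjoin_induction with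
  | mem c hc => exact h c hc
  | algebraMap x => rw [σ.commutes, τ.commutes]
  | add a b _ _ ha hb => rw [map_add, map_add, ha, hb]
  | inv a _ ha => rw [map_inv₀, map_inv₀, ha]
  | mul a b _ _ ha hb => rw [map_mul, map_mul, ha, hb]

lemma diff_tors {mlev j : ℕ} {σ : ↥(LF W n) ≃ₐ[ℚ] ↥(LF W n)}
    (hσ : σ ∈ (ML W n mlev).fixingSubgroup)
    {P : (W.baseChange ↥(LF W n)).toAffine.Point} (hP : 2 ^ (mlev + j) • P = 0) :
    2 ^ j • (Point.map (W' := W) σ.toAlgHom P - P) = 0 := by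
  have h1 : 2 ^ mlev • (2 ^ j • P) = 0 := by
    rw [← mul_nsmul, ← pow_add, add_comm j mlev, hP]
  have h2 := (mem_fixingSubgroup_iff_pts W n mlev σ).mp hσ _ h1
  rw [smul_sub, ← map_nsmul (Point.map (W' := W) σ.toAlgHom), h2, sub_self]

lemma fix_small {mlev j : ℕ} (hj : j ≤ mlev) {σ : ↥(LF W n) ≃ₐ[ℚ] ↥(LF W n)}
    (hσ : σ ∈ (ML W n mlev).fixingSubgroup)
    {t : (W.baseChange ↥(LF W n)).toAffine.Point} (ht : 2 ^ j • t = 0) :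
    Point.map (W' := W) σ.toAlgHom t = t := by
  refine (mem_fixingSubgroup_iff_pts W n mlev σ).mp hσ t ?_
  obtain ⟨d, hd⟩ : 2 ^ j ∣ 2 ^ mlev := pow_dvd_pow 2 hj
  rw [hd, mul_nsmul, ht]
  exact nsmul_zero d

lemma comm_of_mem (hn : 2 ≤ n) {σ τ : ↥(LF W n) ≃ₐ[ℚ] ↥(LF W n)}
    (hσ : σ ∈ (ML W n n).fixingSubgroup) (hτ : τ ∈ (ML W n n).fixingSubgroup) :
    σ * τ = τ * σ := by
  have hpt : ∀ P : (W.baseChange ↥(LF W n)).toAffine.Point, 2 ^ (n + 2) • P = 0 →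
      Point.map (W' := W) (σ * τ).toAlgHom P = Point.map (W' := W) (τ * σ).toAlgHom P := by
    intro P hP
    set s := Point.map (W' := W) σ.toAlgHom P - P with hs_def
    set t := Point.map (W' := W) τ.toAlgHom P - P with ht_def
    have hS : Point.map (W' := W) σ.toAlgHom P = P + s := by
      rw [hs_def]; exact (add_sub_cancel P _).symm
    have hT : Point.map (W' := W) τ.toAlgHom P = P + t := by
      rw [ht_def]; exact (add_sub_cancel P _).symm
    have hs : 2 ^ 2 • s = 0 := diff_tors W n hσ hP
    have ht : 2 ^ 2 • t = 0 := diff_tors W n hτ hP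
    rw [map_pt_mul, map_pt_mul, hT, map_add (Point.map (W' := W) σ.toAlgHom), hS,
      map_add (Point.map (W' := W) τ.toAlgHom), fix_small W n hn hσ ht, fix_small W n hn hτ hs, hT]
    exact add_right_comm P s t
  refine algEquiv_ext_of_SL W n ?_
  rintro c ⟨x, y, hns, htors, hc⟩
  have h := hpt (Point.some _ _ hns) htors
  rw [Point.map_some, Point.map_some] at h
  obtain ⟨hx, hy⟩ := Point.some.inj h
  rcases hc with rfl | rfl
  · exact hx
  · exact hy

lemma sq_mem {mlev : ℕ} (hm1 : 1 ≤ mlev) {σ : ↥(LF W n) ≃ₐ[ℚ] ↥(LF W n)}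
    (hσ : σ ∈ (ML W n mlev).fixingSubgroup) :
    σ ^ 2 ∈ (ML W n (mlev + 1)).fixingSubgroup := by
  rw [mem_fixingSubgroup_iff_pts]
  intro P hP
  set t := Point.map (W' := W) σ.toAlgHom P - P with ht_def
  have hT : Point.map (W' := W) σ.toAlgHom P = P + t := by
    rw [ht_def]; exact (add_sub_cancel P _).symm
  have ht : 2 ^ 1 • t = 0 := diff_tors W n (j := 1) hσ hP
  have h2t : t + t = 0 := by rwa [pow_one, two_smul] at ht
  rw [sq, map_pt_mul, hT, map_add (Point.map (W' := W) σ.toAlgHom), hT, fix_small W n hm1 hσ ht,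
    add_assoc, h2t, add_zero]

lemma sq_eq_one_of_mem {σ : ↥(LF W n) ≃ₐ[ℚ] ↥(LF W n)}
    (hσ : σ ∈ (ML W n (n + 1)).fixingSubgroup) : σ ^ 2 = 1 :=
  eq_one_of_fix_top W n (sq_mem W n (Nat.le_add_left 1 n) hσ)

lemma mem_of_sq_eq_one (hn : 2 ≤ n) (hΔ : (W.baseChange Qbar).Δ ≠ 0)
    {σ : ↥(LF W n) ≃ₐ[ℚ] ↥(LF W n)} (hσ : σ ∈ (ML W n n).fixingSubgroup)
    (hsq : σ ^ 2 = 1) : σ ∈ (ML W n (n + 1)).fixingSubgroup := by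
  rw [mem_fixingSubgroup_iff_pts]
  intro Q' hQ'
  have hQ : 2 ^ (n + 1) • mapPt W n Q' = 0 := (mapPt_tors W n Q').mp hQ'
  obtain ⟨P, hP⟩ := exists_two_smul_eq hΔ (mapPt W n Q')
  have hP4 : 2 ^ (n + 2) • P = 0 := by
    have h1 : (2 * 2 ^ (n + 1)) • P = 2 ^ (n + 1) • (2 • P) := mul_nsmul P 2 (2 ^ (n + 1))
    rw [← pow_succ'] at h1
    rw [h1, hP, hQ]
  obtain ⟨P', hP'⟩ := descend W n P hP4
  have h2P' : 2 • P' = Q' := mapPt_injective W n (by rw [map_nsmul, hP', hP])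
  have hP'4 : 2 ^ (n + 2) • P' = 0 := (mapPt_tors W n P').mpr (by rw [hP']; exact hP4)
  set t := Point.map (W' := W) σ.toAlgHom P' - P' with ht_def
  have hT : Point.map (W' := W) σ.toAlgHom P' = P' + t := by
    rw [ht_def]; exact (add_sub_cancel P' _).symm
  have ht : 2 ^ 2 • t = 0 := diff_tors W n (j := 2) hσ hP'4
  have hfixt := fix_small W n hn hσ ht
  have h2t : 2 • t = 0 := by
    have h1 : Point.map (W' := W) (σ ^ 2).toAlgHom P' = P' := by rw [hsq]; exact map_pt_one W n P'
    rw [sq, map_pt_mul, hT, map_add (Point.map (W' := W) σ.toAlgHom), hT, hfixt] at h1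
    rw [two_smul]
    have h2 : P' + (t + t) = P' + 0 := by
      rw [add_zero, ← add_assoc]
      exact h1
    exact add_left_cancel h2
  rw [← h2P', map_nsmul, hT, smul_add, h2t, add_zero]

end GaloisAction


noncomputable section Final

variable (W : WeierstrassCurve ℚ) [W.IsElliptic] (n : ℕ)

lemma baseChange_Δ_ne_zero : (W.baseChange Qbar).Δ ≠ 0 := by
  have h1 : (W.baseChange Qbar).Δ = algebraMap ℚ Qbar W.Δ := by
    rw [show W.baseChange Qbar = W.map (algebraMap ℚ Qbar) from rfl, WeierstrassCurve.map_Δ]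
  rw [h1, _root_.map_ne_zero]
  exact W.isUnit_Δ.ne_zero

theorem main (hn : 2 ≤ n) (k : ℕ)
    (h : 2 ^ k ∣
      IntermediateField.relfinrank (divisionField W (2 ^ n)) (divisionField W (2 ^ (n + 1)))) :
    2 ^ k ∣
      IntermediateField.relfinrank (divisionField W (2 ^ (n + 1)))
        (divisionField W (2 ^ (n + 2))) := by
  classical
  haveI hFD : FiniteDimensional ℚ ↥(LF W n) := finiteDimensional_divisionField W (n + 2)
  haveI hGal : IsGalois ℚ ↥(LF W n) := isGalois_divisionField W (n + 2)
  have hmap1 : divisionField W (2 ^ n) = (ML W n n).map (LF W n).val :=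
    (map_ML W n (by omega)).symm
  have hmap2 : divisionField W (2 ^ (n + 1)) = (ML W n (n + 1)).map (LF W n).val :=
    (map_ML W n (by omega)).symm
  have hmap3 : divisionField W (2 ^ (n + 2)) = (ML W n (n + 2)).map (LF W n).val :=
    (map_ML W n le_rfl).symm
  rw [hmap1, hmap2, IntermediateField.relfinrank_map_map] at h
  rw [hmap2, hmap3, IntermediateField.relfinrank_map_map, ML_top,
    IntermediateField.relfinrank_top_right]
  set A := ML W n n with hA
  set B := ML W n (n + 1) with hB
  set HA := A.fixingSubgroup with hHA
  set HB := B.fixingSubgroup with hHB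
  have hBA : HB ≤ HA := IntermediateField.fixingSubgroup_antitone (ML_mono W n (by omega))
  have hcardA : Nat.card ↥HA = Module.finrank ↥A ↥(LF W n) := by
    exact IsGalois.card_fixingSubgroup_eq_finrank A
  have hcardB : Nat.card ↥HB = Module.finrank ↥B ↥(LF W n) := by
    exact IsGalois.card_fixingSubgroup_eq_finrank B
  have hΔ := baseChange_Δ_ne_zero W
  let φ : ↥HA →* ↥HB :=
    { toFun := fun σ => ⟨(σ : ↥(LF W n) ≃ₐ[ℚ] ↥(LF W n)) ^ 2, sq_mem W n (by omega) σ.2⟩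
      map_one' := by
        refine Subtype.ext ?_
        show (((1 : ↥HA) : ↥(LF W n) ≃ₐ[ℚ] ↥(LF W n))) ^ 2 = ((1 : ↥HB) : _)
        rw [Subgroup.coe_one, Subgroup.coe_one, one_pow]
      map_mul' := fun σ τ => by
        refine Subtype.ext ?_
        show ((σ * τ : ↥HA) : ↥(LF W n) ≃ₐ[ℚ] ↥(LF W n)) ^ 2
          = ((σ : ↥(LF W n) ≃ₐ[ℚ] ↥(LF W n)) ^ 2) * ((τ : ↥(LF W n) ≃ₐ[ℚ] ↥(LF W n)) ^ 2)
        rw [Subgroup.coe_mul]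
        exact Commute.mul_pow (comm_of_mem W n hn σ.2 τ.2) 2 }
  have hker : φ.ker = HB.subgroupOf HA := by
    ext σ
    rw [MonoidHom.mem_ker, Subgroup.mem_subgroupOf]
    constructor
    · intro hσ
      have h1 : (σ : ↥(LF W n) ≃ₐ[ℚ] ↥(LF W n)) ^ 2 = 1 := congrArg Subtype.val hσ
      exact mem_of_sq_eq_one W n hn hΔ σ.2 h1
    · intro hσ
      exact Subtype.ext (sq_eq_one_of_mem W n hσ)
  have hqdvd : Nat.card (↥HA ⧸ φ.ker) ∣ Nat.card ↥HB := by
    rw [Nat.card_congr (Equiv.ofInjective _ (QuotientGroup.kerLift_injective φ))]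
    exact Subgroup.card_subgroup_dvd_card (QuotientGroup.kerLift φ).range
  have hLag : Nat.card ↥HA = Nat.card (↥HA ⧸ φ.ker) * Nat.card ↥(φ.ker) :=
    Subgroup.card_eq_card_quotient_mul_card_subgroup φ.ker
  have hcardker : Nat.card ↥(φ.ker) = Nat.card ↥HB := by
    rw [hker]
    exact Nat.card_congr (Subgroup.subgroupOfEquivOfLe hBA).toEquiv
  have hABle : A ≤ B := ML_mono W n (by omega)
  have hmul : IntermediateField.relfinrank A B * Module.finrank ↥B ↥(LF W n)
      = Module.finrank ↥A ↥(LF W n) := IntermediateField.relfinrank_mul_finrank_top hABle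
  have hBpos : Module.finrank ↥B ↥(LF W n) ≠ 0 := by
    haveI : FiniteDimensional ↥B ↥(LF W n) := FiniteDimensional.right ℚ ↥B ↥(LF W n)
    exact Module.finrank_pos.ne'
  have hd1 : IntermediateField.relfinrank A B = Nat.card (↥HA ⧸ φ.ker) := by
    have h1 : IntermediateField.relfinrank A B * Module.finrank ↥B ↥(LF W n)
        = Nat.card (↥HA ⧸ φ.ker) * Module.finrank ↥B ↥(LF W n) := by
      rw [hmul, ← hcardA, hLag, hcardker, hcardB]
    exact Nat.eq_of_mul_eq_mul_right (Nat.pos_of_ne_zero hBpos) h1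
  rw [hd1] at h
  calc (2 : ℕ) ^ k ∣ Nat.card (↥HA ⧸ φ.ker) := h
    _ ∣ Nat.card ↥HB := hqdvd
    _ = Module.finrank ↥B ↥(LF W n) := hcardB
    _ ∣ Module.finrank ↥B ↥(LF W n) := dvd_rfl

end Final

end DivFieldProof

/-- If `n ≥ 2`, `k ∈ {1,2,3,4}`, and `2^k ∣ [ℚ(E[2^(n+1)]) : ℚ(E[2^n])]`, then
`2^k ∣ [ℚ(E[2^(n+2)]) : ℚ(E[2^(n+1)])]`. The relative degree of the (nested) division
fields is expressed via `IntermediateField.relfinrank`. -/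
theorem dvd_relfinrank_succ_of_dvd_relfinrank_two (W : WeierstrassCurve ℚ) [W.IsElliptic]
    (n : ℕ) (hn : 2 ≤ n) (k : ℕ) (hk : k ∈ ({1, 2, 3, 4} : Set ℕ))
    (h : 2 ^ k ∣
      IntermediateField.relfinrank (divisionField W (2 ^ n)) (divisionField W (2 ^ (n + 1)))) :
    2 ^ k ∣
      IntermediateField.relfinrank (divisionField W (2 ^ (n + 1)))
        (divisionField W (2 ^ (n + 2))) :=
  DivFieldProof.main W n hn k h
end

section
/- Let p be a prime and let G be a nilpotent subgroup of GL₂(ℤ/p²ℤ). Let π : GL₂(ℤ/p²ℤ) → GL₂(ℤ/pℤ) be the entrywise reduction map, and assume that p does not divide the order of π(G). Then at least one of the following holds: (1) G is abelian; (2) every element of G lying in the kernel of π is a scalar matrix αI with α ∈ (ℤ/p²ℤ)ˣ and α ≡ 1 (mod p). -/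
open Matrix

/-- The entrywise reduction map `GL₂(ℤ/p²ℤ) → GL₂(ℤ/pℤ)` induced by the ring homomorphism
`ℤ/p²ℤ → ℤ/pℤ`. -/
noncomputable def glRed (p : ℕ) :
    GL (Fin 2) (ZMod (p ^ 2)) →* GL (Fin 2) (ZMod p) :=
  Matrix.GeneralLinearGroup.map (ZMod.castHom (dvd_pow_self p two_ne_zero) (ZMod p))


open Matrix

section scalarAux

variable {p : ℕ}

/-- reduction map -/
private def ff (p : ℕ) : ZMod (p ^ 2) →+* ZMod p :=
  ZMod.castHom (dvd_pow_self p two_ne_zero) (ZMod p)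

/-- "division by p" map -/
private def dd (p : ℕ) (x : ZMod (p ^ 2)) : ZMod p := ((x.val / p : ℕ) : ZMod p)

lemma hp2pos (hp : p.Prime) : 0 < p ^ 2 := pow_pos hp.pos 2

lemma hpltsq (hp : p.Prime) : p < p ^ 2 := by
  calc p = p ^ 1 := (pow_one p).symm
  _ < p ^ 2 := Nat.pow_lt_pow_right hp.one_lt one_lt_two

lemma ff_eq_zero_iff (hp : p.Prime) (x : ZMod (p ^ 2)) :
    ff p x = 0 ↔ p ∣ x.val := by
  haveI : NeZero (p ^ 2) := ⟨(hp2pos hp).ne'⟩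
  haveI : NeZero p := ⟨hp.ne_zero⟩
  rw [ff, ZMod.castHom_apply, ← ZMod.natCast_val, ZMod.natCast_eq_zero_iff]

lemma exists_pmul (hp : p.Prime) {x : ZMod (p ^ 2)} (hx : ff p x = 0) :
    x = (p : ZMod (p ^ 2)) * ((x.val / p : ℕ) : ZMod (p ^ 2)) := by
  haveI : NeZero (p ^ 2) := ⟨(hp2pos hp).ne'⟩
  have hdvd := (ff_eq_zero_iff hp x).mp hx
  have h2 : ((x.val : ℕ) : ZMod (p ^ 2)) = x := by
    rw [ZMod.natCast_val, ZMod.cast_id]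
  conv_lhs => rw [← h2]
  rw [← Nat.cast_mul, Nat.mul_div_cancel' hdvd]

lemma dd_pmul (hp : p.Prime) (y : ZMod (p ^ 2)) :
    dd p ((p : ZMod (p ^ 2)) * y) = ff p y := by
  haveI : NeZero (p ^ 2) := ⟨(hp2pos hp).ne'⟩
  have hvp : (p : ZMod (p ^ 2)).val = p := by
    rw [ZMod.val_natCast, Nat.mod_eq_of_lt (hpltsq hp)]
  rw [dd, ZMod.val_mul, hvp]
  have : ∀ m : ℕ, p * m % p ^ 2 = p * (m % p) := fun m => by
    rw [pow_two, Nat.mul_mod_mul_left]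
  simp only [this y.val]
  rw [Nat.mul_div_cancel_left _ hp.pos, ZMod.natCast_mod,
    ff, ZMod.castHom_apply, ZMod.natCast_val]

lemma dd_eq_zero (hp : p.Prime) {x : ZMod (p ^ 2)} (hx : ff p x = 0)
    (hd : dd p x = 0) : x = 0 := by
  haveI : NeZero (p ^ 2) := ⟨(hp2pos hp).ne'⟩
  haveI : NeZero p := ⟨hp.ne_zero⟩
  have hdvd := (ff_eq_zero_iff hp x).mp hx
  have hlt : x.val / p < p := by
    have h1 : x.val < p * p := by rw [← pow_two]; exact ZMod.val_lt x
    exact (Nat.div_lt_iff_lt_mul hp.pos).mpr h1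
  have h0 : x.val / p = 0 :=
    Nat.eq_zero_of_dvd_of_lt ((ZMod.natCast_eq_zero_iff _ p).mp hd) hlt
  have hv0 : x.val = 0 := by
    have h1 := Nat.mul_div_cancel' hdvd
    rw [h0, Nat.mul_zero] at h1
    omega
  have hc : ((x.val : ℕ) : ZMod (p ^ 2)) = x := by
    rw [ZMod.natCast_val, ZMod.cast_id]
  rw [← hc, hv0, Nat.cast_zero]

lemma ff_p_eq_zero (hp : p.Prime) : ff p ((p : ℕ) : ZMod (p ^ 2)) = 0 := by
  rw [map_natCast, ZMod.natCast_self]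

lemma mul_eq_zero_of_ff (hp : p.Prime) {x y : ZMod (p ^ 2)} (hx : ff p x = 0)
    (hy : ff p y = 0) : x * y = 0 := by
  rw [exists_pmul hp hx, exists_pmul hp hy]
  have hpp : ((p : ZMod (p ^ 2)) * (p : ZMod (p ^ 2))) = 0 := by
    rw [← Nat.cast_mul, ← pow_two, ZMod.natCast_self]
  rw [mul_mul_mul_comm, hpp, zero_mul]

lemma dd_add (hp : p.Prime) {x y : ZMod (p ^ 2)} (hx : ff p x = 0)
    (hy : ff p y = 0) : dd p (x + y) = dd p x + dd p y := by
  conv_lhs => rw [exists_pmul hp hx, exists_pmul hp hy, ← mul_add]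
  rw [dd_pmul hp, map_add]
  have dx : dd p x = ff p ((x.val / p : ℕ) : ZMod (p ^ 2)) := by
    conv_lhs => rw [exists_pmul hp hx]
    rw [dd_pmul hp]
  have dy : dd p y = ff p ((y.val / p : ℕ) : ZMod (p ^ 2)) := by
    conv_lhs => rw [exists_pmul hp hy]
    rw [dd_pmul hp]
  rw [dx, dy]

lemma dd_mul_left (hp : p.Prime) (c : ZMod (p ^ 2)) {x : ZMod (p ^ 2)}
    (hx : ff p x = 0) : dd p (c * x) = ff p c * dd p x := by
  conv_lhs => rw [exists_pmul hp hx, mul_left_comm]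
  conv_rhs => rw [exists_pmul hp hx]
  rw [dd_pmul hp, dd_pmul hp, _root_.map_mul]

lemma dd_mul_right (hp : p.Prime) (c : ZMod (p ^ 2)) {x : ZMod (p ^ 2)}
    (hx : ff p x = 0) : dd p (x * c) = dd p x * ff p c := by
  rw [mul_comm, dd_mul_left hp c hx, mul_comm]

lemma dd_inj (hp : p.Prime) {x y : ZMod (p ^ 2)} (hx : ff p x = 0)
    (hy : ff p y = 0) (h : dd p x = dd p y) : x = y := by
  have hsub : ff p (x - y) = 0 := by rw [map_sub, hx, hy, sub_zero]
  have hdsub : dd p (x - y) = 0 := by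
    have hx' := exists_pmul hp hx
    have hy' := exists_pmul hp hy
    have : x - y = (p : ZMod (p ^ 2)) * (((x.val / p : ℕ) : ZMod (p ^ 2)) - ((y.val / p : ℕ) : ZMod (p ^ 2))) := by
      rw [mul_sub, ← hx', ← hy']
    rw [this, dd_pmul hp, map_sub]
    have dx : dd p x = ff p ((x.val / p : ℕ) : ZMod (p ^ 2)) := by
      conv_lhs => rw [hx']
      rw [dd_pmul hp]
    have dy : dd p y = ff p ((y.val / p : ℕ) : ZMod (p ^ 2)) := by
      conv_lhs => rw [hy']
      rw [dd_pmul hp]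
    rw [← dx, ← dy, h, sub_self]
  exact sub_eq_zero.mp (dd_eq_zero hp hsub hdsub)

lemma comm_of_commute_nonscalar {F : Type*} [Field F] {A B C : Matrix (Fin 2) (Fin 2) F}
    (hns : ¬(A 0 1 = 0 ∧ A 1 0 = 0 ∧ A 0 0 = A 1 1))
    (hB : A * B = B * A) (hC : A * C = C * A) : B * C = C * B := by
  have hB00 : A 0 0 * B 0 0 + A 0 1 * B 1 0 = B 0 0 * A 0 0 + B 0 1 * A 1 0 := by
    have := congrFun (congrFun hB 0) 0
    simpa [Matrix.mul_apply, Fin.sum_univ_two] using this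
  have hB01 : A 0 0 * B 0 1 + A 0 1 * B 1 1 = B 0 0 * A 0 1 + B 0 1 * A 1 1 := by
    have := congrFun (congrFun hB 0) 1
    simpa [Matrix.mul_apply, Fin.sum_univ_two] using this
  have hB10 : A 1 0 * B 0 0 + A 1 1 * B 1 0 = B 1 0 * A 0 0 + B 1 1 * A 1 0 := by
    have := congrFun (congrFun hB 1) 0
    simpa [Matrix.mul_apply, Fin.sum_univ_two] using this
  have hC00 : A 0 0 * C 0 0 + A 0 1 * C 1 0 = C 0 0 * A 0 0 + C 0 1 * A 1 0 := by
    have := congrFun (congrFun hC 0) 0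
    simpa [Matrix.mul_apply, Fin.sum_univ_two] using this
  have hC01 : A 0 0 * C 0 1 + A 0 1 * C 1 1 = C 0 0 * A 0 1 + C 0 1 * A 1 1 := by
    have := congrFun (congrFun hC 0) 1
    simpa [Matrix.mul_apply, Fin.sum_univ_two] using this
  have hC10 : A 1 0 * C 0 0 + A 1 1 * C 1 0 = C 1 0 * A 0 0 + C 1 1 * A 1 0 := by
    have := congrFun (congrFun hC 1) 0
    simpa [Matrix.mul_apply, Fin.sum_univ_two] using this
  suffices h : B 0 1 * C 1 0 = C 0 1 * B 1 0 ∧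
      (B 0 0 * C 0 1 + B 0 1 * C 1 1 = C 0 0 * B 0 1 + C 0 1 * B 1 1) ∧
      (B 1 0 * C 0 0 + B 1 1 * C 1 0 = C 1 0 * B 0 0 + C 1 1 * B 1 0) by
    obtain ⟨F1, F2, F3⟩ := h
    ext i j
    fin_cases i <;> fin_cases j <;>
      simp [Matrix.mul_apply, Fin.sum_univ_two] <;>
      first
        | linear_combination F1
        | linear_combination -F1
        | linear_combination F2
        | linear_combination -F2
        | linear_combination F3
        | linear_combination -F3
  by_cases hb : A 0 1 = 0
  · by_cases hc : A 1 0 = 0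
    · have had : A 0 0 - A 1 1 ≠ 0 :=
        sub_ne_zero_of_ne (fun h => hns ⟨hb, hc, h⟩)
      have hBf : B 0 1 = 0 := by
        have h2 : B 0 1 * (A 0 0 - A 1 1) = 0 := by
          linear_combination hB01 + (B 0 0 - B 1 1) * hb
        exact (mul_eq_zero.mp h2).resolve_right had
      have hBg : B 1 0 = 0 := by
        have h2 : B 1 0 * (A 0 0 - A 1 1) = 0 := by
          linear_combination -hB10 + (B 0 0 - B 1 1) * hc
        exact (mul_eq_zero.mp h2).resolve_right had
      have hCf : C 0 1 = 0 := by
        have h2 : C 0 1 * (A 0 0 - A 1 1) = 0 := by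
          linear_combination hC01 + (C 0 0 - C 1 1) * hb
        exact (mul_eq_zero.mp h2).resolve_right had
      have hCg : C 1 0 = 0 := by
        have h2 : C 1 0 * (A 0 0 - A 1 1) = 0 := by
          linear_combination -hC10 + (C 0 0 - C 1 1) * hc
        exact (mul_eq_zero.mp h2).resolve_right had
      refine ⟨?_, ?_, ?_⟩ <;> simp [hBf, hBg, hCf, hCg]
    · have hBf : B 0 1 = A 0 1 * B 1 0 / A 1 0 := by
        field_simp
        linear_combination -hB00
      have hBe : B 0 0 = B 1 1 + B 1 0 * (A 0 0 - A 1 1) / A 1 0 := by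
        field_simp
        linear_combination hB10
      have hCf : C 0 1 = A 0 1 * C 1 0 / A 1 0 := by
        field_simp
        linear_combination -hC00
      have hCe : C 0 0 = C 1 1 + C 1 0 * (A 0 0 - A 1 1) / A 1 0 := by
        field_simp
        linear_combination hC10
      refine ⟨?_, ?_, ?_⟩
      · rw [hBf, hCf]; field_simp
      · rw [hBf, hBe, hCf, hCe]; field_simp; ring
      · rw [hBe, hCe]; field_simp; ring
  · have hBg : B 1 0 = A 1 0 * B 0 1 / A 0 1 := by
      field_simp
      linear_combination hB00
    have hBh : B 1 1 = B 0 0 + B 0 1 * (A 1 1 - A 0 0) / A 0 1 := by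
      field_simp
      linear_combination hB01
    have hCg : C 1 0 = A 1 0 * C 0 1 / A 0 1 := by
      field_simp
      linear_combination hC00
    have hCh : C 1 1 = C 0 0 + C 0 1 * (A 1 1 - A 0 0) / A 0 1 := by
      field_simp
      linear_combination hC01
    refine ⟨?_, ?_, ?_⟩
    · rw [hBg, hCg]; field_simp
    · rw [hBh, hCh]; field_simp; ring
    · rw [hBg, hBh, hCg, hCh]; field_simp; ring

section matAux
variable {p : ℕ}

/-- entrywise `dd` -/
private def DD (p : ℕ) (N : Matrix (Fin 2) (Fin 2) (ZMod (p ^ 2))) :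
    Matrix (Fin 2) (Fin 2) (ZMod p) := Matrix.of fun i j => dd p (N i j)

lemma ff_mul_zero (c : ZMod (p ^ 2)) {x : ZMod (p ^ 2)} (hx : ff p x = 0) :
    ff p (c * x) = 0 := by rw [_root_.map_mul, hx, mul_zero]

lemma matmul_eq_zero (hp : p.Prime) {N M : Matrix (Fin 2) (Fin 2) (ZMod (p ^ 2))}
    (hN : ∀ i j, ff p (N i j) = 0) (hM : ∀ i j, ff p (M i j) = 0) :
    N * M = 0 := by
  ext i j
  rw [Matrix.mul_apply, Fin.sum_univ_two,
    mul_eq_zero_of_ff hp (hN i 0) (hM 0 j), mul_eq_zero_of_ff hp (hN i 1) (hM 1 j),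
    add_zero, Matrix.zero_apply]

lemma psmul_eq_zero (hp : p.Prime) {N : Matrix (Fin 2) (Fin 2) (ZMod (p ^ 2))}
    (hN : ∀ i j, ff p (N i j) = 0) : (p : ℕ) • N = 0 := by
  ext i j
  rw [Matrix.smul_apply, nsmul_eq_mul, Matrix.zero_apply,
    mul_eq_zero_of_ff hp (ff_p_eq_zero hp) (hN i j)]

lemma one_add_pow (hp : p.Prime) {N : Matrix (Fin 2) (Fin 2) (ZMod (p ^ 2))}
    (hN : ∀ i j, ff p (N i j) = 0) : (1 + N) ^ p = 1 := by
  have hsq : N * N = 0 := matmul_eq_zero hp hN hN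
  have key : ∀ n : ℕ, (1 + N) ^ n = 1 + n • N := by
    intro n
    induction n with
    | zero => simp
    | succ n ih =>
      have h1 : (1 + N) ^ (n + 1) = (1 + N) ^ n * (1 + N) := pow_succ _ _
      rw [h1, ih, succ_nsmul, mul_add, add_mul, add_mul, one_mul, mul_one,
        smul_mul_assoc, hsq, smul_zero, add_zero, one_mul]
      abel
  rw [key p, psmul_eq_zero hp hN, add_zero]

lemma DD_mul_left (hp : p.Prime) (h N : Matrix (Fin 2) (Fin 2) (ZMod (p ^ 2)))
    (hN : ∀ i j, ff p (N i j) = 0) :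
    DD p (h * N) = h.map (ff p) * DD p N := by
  ext i j
  show dd p ((h * N) i j) = (h.map (ff p) * DD p N) i j
  rw [Matrix.mul_apply, Fin.sum_univ_two, Matrix.mul_apply, Fin.sum_univ_two,
    dd_add hp (ff_mul_zero _ (hN 0 j)) (ff_mul_zero _ (hN 1 j)),
    dd_mul_left hp _ (hN 0 j), dd_mul_left hp _ (hN 1 j)]
  rfl

lemma ff_mul_zero' (c : ZMod (p ^ 2)) {x : ZMod (p ^ 2)} (hx : ff p x = 0) :
    ff p (x * c) = 0 := by rw [_root_.map_mul, hx, zero_mul]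

lemma DD_mul_right (hp : p.Prime) (h N : Matrix (Fin 2) (Fin 2) (ZMod (p ^ 2)))
    (hN : ∀ i j, ff p (N i j) = 0) :
    DD p (N * h) = DD p N * h.map (ff p) := by
  ext i j
  show dd p ((N * h) i j) = (DD p N * h.map (ff p)) i j
  rw [Matrix.mul_apply, Fin.sum_univ_two, Matrix.mul_apply, Fin.sum_univ_two,
    dd_add hp (ff_mul_zero' _ (hN i 0)) (ff_mul_zero' _ (hN i 1)),
    dd_mul_right hp _ (hN i 0), dd_mul_right hp _ (hN i 1)]
  rfl

end matAux

lemma ker_mat_comm {p : ℕ} (hp : p.Prime) {U V : Matrix (Fin 2) (Fin 2) (ZMod (p ^ 2))}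
    (hU : ∀ i j, ff p ((U - 1) i j) = 0) (hV : ∀ i j, ff p ((V - 1) i j) = 0) :
    U * V = V * U := by
  have h1 : (U - 1) * (V - 1) = 0 := matmul_eq_zero hp hU hV
  have h2 : (V - 1) * (U - 1) = 0 := matmul_eq_zero hp hV hU
  have e1 : U * V = (U - 1) * (V - 1) + (U - 1) + (V - 1) + 1 := by noncomm_ring
  have e2 : V * U = (V - 1) * (U - 1) + (U - 1) + (V - 1) + 1 := by noncomm_ring
  rw [e1, e2, h1, h2]

set_option maxHeartbeats 2000000 in
/-- Let `p` be a prime and `G` a nilpotent subgroup of `GL₂(ℤ/p²ℤ)`. If `p` does not divide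
the order of the image of `G` under entrywise reduction mod `p`, then either `G` is abelian,
or every element of `G` in the kernel of the reduction is a scalar matrix `α • 1` with
`α ∈ (ℤ/p²ℤ)ˣ` and `α ≡ 1 (mod p)`. -/
theorem nilpotent_subgroup_GL2_ZMod_sq (p : ℕ) (hp : p.Prime)
    (G : Subgroup (GL (Fin 2) (ZMod (p ^ 2))))
    (hnil : Group.IsNilpotent G)
    (hord : ¬ p ∣ Nat.card (G.map (glRed p))) :
    (∀ a ∈ G, ∀ b ∈ G, a * b = b * a) ∨
      (∀ g ∈ G, glRed p g = 1 →
        ∃ α : (ZMod (p ^ 2))ˣ,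
          (g : Matrix (Fin 2) (Fin 2) (ZMod (p ^ 2))) =
              (α : ZMod (p ^ 2)) • (1 : Matrix (Fin 2) (Fin 2) (ZMod (p ^ 2))) ∧
            ZMod.castHom (dvd_pow_self p two_ne_zero) (ZMod p) (α : ZMod (p ^ 2)) = 1) := by
  classical
  haveI : Fact p.Prime := ⟨hp⟩
  haveI : NeZero (p ^ 2) := ⟨(pow_pos hp.pos 2).ne'⟩
  by_cases hsc : ∀ g ∈ G, glRed p g = 1 →
      ∃ α : (ZMod (p ^ 2))ˣ,
        (g : Matrix (Fin 2) (Fin 2) (ZMod (p ^ 2))) =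
            (α : ZMod (p ^ 2)) • (1 : Matrix (Fin 2) (Fin 2) (ZMod (p ^ 2))) ∧
          ZMod.castHom (dvd_pow_self p two_ne_zero) (ZMod p) (α : ZMod (p ^ 2)) = 1
  · exact Or.inr hsc
  refine Or.inl ?_
  push_neg at hsc
  obtain ⟨g₀, hg₀G, hg₀red, hg₀ns⟩ := hsc
  set M₀ : Matrix (Fin 2) (Fin 2) (ZMod (p ^ 2)) :=
    (g₀ : Matrix (Fin 2) (Fin 2) (ZMod (p ^ 2))) with hM₀def
  have hmap0 : M₀.map (ff p) = 1 := congrArg Units.val hg₀red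
  have hN₀ : ∀ i j, ff p ((M₀ - 1) i j) = 0 := by
    intro i j
    have h1 : ff p (M₀ i j) = (1 : Matrix (Fin 2) (Fin 2) (ZMod p)) i j :=
      congrFun (congrFun hmap0 i) j
    rw [Matrix.sub_apply, map_sub, h1]
    by_cases hij : i = j <;> simp [Matrix.one_apply, hij]
  set A₀ : Matrix (Fin 2) (Fin 2) (ZMod p) := DD p (M₀ - 1) with hA₀def
  have hA₀ns : ¬(A₀ 0 1 = 0 ∧ A₀ 1 0 = 0 ∧ A₀ 0 0 = A₀ 1 1) := by
    rintro ⟨h1, h2, h3⟩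
    have e1 : (M₀ - 1) 0 1 = 0 := dd_eq_zero hp (hN₀ 0 1) h1
    have e2 : (M₀ - 1) 1 0 = 0 := dd_eq_zero hp (hN₀ 1 0) h2
    have e3 : (M₀ - 1) 0 0 = (M₀ - 1) 1 1 := dd_inj hp (hN₀ 0 0) (hN₀ 1 1) h3
    have hM : ∀ i j, M₀ i j = (M₀ - 1) i j + (1 : Matrix (Fin 2) (Fin 2) (ZMod (p ^ 2))) i j := by
      intro i j; rw [Matrix.sub_apply]; ring
    have hMsc : M₀ = M₀ 0 0 • (1 : Matrix (Fin 2) (Fin 2) (ZMod (p ^ 2))) := by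
      have hz1 : M₀ 0 1 = 0 := by
        have h := hM 0 1
        rw [e1] at h
        simpa [Matrix.one_apply] using h
      have hz2 : M₀ 1 0 = 0 := by
        have h := hM 1 0
        rw [e2] at h
        simpa [Matrix.one_apply] using h
      have hd : M₀ 1 1 = M₀ 0 0 := by
        rw [hM 1 1, hM 0 0, e3]
        simp [Matrix.one_apply]
      ext i j
      fin_cases i <;> fin_cases j
      · simp [Matrix.one_apply]
      · simp [Matrix.one_apply, hz1]
      · simp [Matrix.one_apply, hz2]
      · simp [Matrix.one_apply, hd]
    have hU : IsUnit M₀ := g₀.isUnit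
    have hdet : IsUnit (M₀.det) := (Matrix.isUnit_iff_isUnit_det M₀).mp hU
    rw [hMsc, Matrix.det_smul, Matrix.det_one, mul_one] at hdet
    have ha : IsUnit (M₀ 0 0) := by
      have h4 : IsUnit (M₀ 0 0 * M₀ 0 0) := by
        rwa [← sq]
      exact isUnit_of_mul_isUnit_left h4
    obtain ⟨α, hα⟩ := ha
    refine hg₀ns α ?_ ?_
    · rw [hα]; exact hMsc
    · show ff p (α : ZMod (p ^ 2)) = 1
      rw [hα]
      have := congrFun (congrFun hmap0 0) 0
      simpa [Matrix.one_apply] using this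
  -- group-theoretic part
  haveI : Finite ↥G := inferInstance
  set φ : ↥G →* GL (Fin 2) (ZMod p) := (glRed p).comp G.subtype with hφdef
  have hrange : φ.range = G.map (glRed p) := by
    rw [hφdef, MonoidHom.range_comp, Subgroup.range_subtype]
  have hord' : ¬ p ∣ Nat.card φ.range := by rw [hrange]; exact hord
  have hker_entries : ∀ x : ↥G, φ x = 1 → ∀ i j,
      ff p ((((x : GL (Fin 2) (ZMod (p ^ 2))) : Matrix (Fin 2) (Fin 2) (ZMod (p ^ 2))) - 1) i j) = 0 := by
    intro x hx i j
    have hmap : ((x : GL (Fin 2) (ZMod (p ^ 2))) : Matrix (Fin 2) (Fin 2) (ZMod (p ^ 2))).map (ff p) = 1 :=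
      congrArg Units.val hx
    have h1 : ff p (((x : GL (Fin 2) (ZMod (p ^ 2))) : Matrix (Fin 2) (Fin 2) (ZMod (p ^ 2))) i j)
        = (1 : Matrix (Fin 2) (Fin 2) (ZMod p)) i j := congrFun (congrFun hmap i) j
    rw [Matrix.sub_apply, map_sub, h1]
    by_cases hij : i = j <;> simp [Matrix.one_apply, hij]
  have hker_comm : ∀ x y : ↥G, φ x = 1 → φ y = 1 → x * y = y * x := by
    intro x y hx hy
    have := ker_mat_comm hp (hker_entries x hx) (hker_entries y hy)
    apply Subtype.ext
    apply Units.ext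
    exact this
  have hKp : IsPGroup p ↥φ.ker := by
    intro x
    refine ⟨1, ?_⟩
    have hy : φ (x : ↥G) = 1 := x.2
    have hN := hker_entries (x : ↥G) hy
    have hmat : (((x : ↥G) : GL (Fin 2) (ZMod (p ^ 2))) : Matrix (Fin 2) (Fin 2) (ZMod (p ^ 2))) ^ p = 1 := by
      have h2 := one_add_pow hp hN
      have h3 : (1 : Matrix (Fin 2) (Fin 2) (ZMod (p ^ 2)))
          + ((((x : ↥G) : GL (Fin 2) (ZMod (p ^ 2))) : Matrix (Fin 2) (Fin 2) (ZMod (p ^ 2))) - 1)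
          = (((x : ↥G) : GL (Fin 2) (ZMod (p ^ 2))) : Matrix (Fin 2) (Fin 2) (ZMod (p ^ 2))) := by
        noncomm_ring
      rw [h3] at h2
      exact h2
    have hGL : ((x : ↥G) : GL (Fin 2) (ZMod (p ^ 2))) ^ p = 1 := by
      apply Units.ext
      rw [Units.val_pow_eq_pow_val, hmat, Units.val_one]
    have hGgrp : (x : ↥G) ^ p = 1 := by
      apply Subtype.ext
      rw [SubgroupClass.coe_pow, hGL, OneMemClass.coe_one]
    apply Subtype.ext
    rw [SubgroupClass.coe_pow, pow_one, hGgrp, OneMemClass.coe_one]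
  have htfae := isNilpotent_of_finite_tfae (G := ↥G)
  have hnormal : ∀ (q : ℕ) (_ : Fact q.Prime) (P : Sylow q ↥G), (↑P : Subgroup ↥G).Normal :=
    (htfae.out 0 3).mp hnil
  obtain ⟨e⟩ := (htfae.out 0 4).mp hnil
  have hcrux : ∀ (q : ℕ), q.Prime → ∀ (P : Sylow q ↥G) (s t : ↥G),
      s ∈ (P : Subgroup ↥G) → t ∈ (P : Subgroup ↥G) → s * t = t * s := by
    intro q hq P s t hs ht
    haveI : Fact q.Prime := ⟨hq⟩
    by_cases hqp : q = p
    · subst hqp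
      have hkerP : ∀ u : ↥G, u ∈ (P : Subgroup ↥G) → φ u = 1 := by
        intro u hu
        obtain ⟨k, hk⟩ := P.isPGroup' ⟨u, hu⟩
        have hk' : u ^ q ^ k = 1 := by
          simpa using congrArg Subtype.val hk
        have h1 : orderOf (φ u) ∣ q ^ k :=
          (orderOf_map_dvd φ u).trans (orderOf_dvd_of_pow_eq_one hk')
        have h2 : orderOf (φ u) ∣ Nat.card φ.range :=
          Subgroup.orderOf_dvd_natCard φ.range ⟨u, rfl⟩
        obtain ⟨j, hjk, hje⟩ := (Nat.dvd_prime_pow hq).mp h1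
        rcases Nat.eq_zero_or_pos j with hj0 | hjpos
        · rw [hj0, pow_zero] at hje
          exact orderOf_eq_one_iff.mp hje
        · exact absurd (dvd_trans (hje ▸ dvd_pow_self q hjpos.ne') h2) hord'
      exact hker_comm s t (hkerP s hs) (hkerP t ht)
    · have hdisj : Disjoint φ.ker (P : Subgroup ↥G) :=
        IsPGroup.disjoint_of_ne p q (fun h => hqp h.symm) _ _ hKp P.isPGroup'
      have hx₀mem : (⟨g₀, hg₀G⟩ : ↥G) ∈ φ.ker := by
        rw [MonoidHom.mem_ker]
        exact hg₀red
      have hcent : ∀ u : ↥G, u ∈ (P : Subgroup ↥G) →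
          (((u : GL (Fin 2) (ZMod (p ^ 2))) : Matrix (Fin 2) (Fin 2) (ZMod (p ^ 2))).map (ff p)) * A₀
            = A₀ * (((u : GL (Fin 2) (ZMod (p ^ 2))) : Matrix (Fin 2) (Fin 2) (ZMod (p ^ 2))).map (ff p)) := by
        intro u hu
        have hcom : (⟨g₀, hg₀G⟩ : ↥G) * u = u * ⟨g₀, hg₀G⟩ :=
          Subgroup.commute_of_normal_of_disjoint φ.ker P (MonoidHom.normal_ker φ)
            (hnormal q ⟨hq⟩ P) hdisj _ _ hx₀mem hu
        have hGL : g₀ * (u : GL (Fin 2) (ZMod (p ^ 2))) = (u : GL (Fin 2) (ZMod (p ^ 2))) * g₀ := by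
          have := congrArg Subtype.val hcom
          simpa using this
        have hmat : M₀ * ((u : GL (Fin 2) (ZMod (p ^ 2))) : Matrix (Fin 2) (Fin 2) (ZMod (p ^ 2)))
            = ((u : GL (Fin 2) (ZMod (p ^ 2))) : Matrix (Fin 2) (Fin 2) (ZMod (p ^ 2))) * M₀ := by
          have := congrArg Units.val hGL
          simpa using this
        set Mu := ((u : GL (Fin 2) (ZMod (p ^ 2))) : Matrix (Fin 2) (Fin 2) (ZMod (p ^ 2))) with hMu
        have hNcomm : Mu * (M₀ - 1) = (M₀ - 1) * Mu := by
          rw [mul_sub, sub_mul, mul_one, one_mul, hmat]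
        have hDD := congrArg (DD p) hNcomm
        rw [DD_mul_left hp Mu (M₀ - 1) hN₀, DD_mul_right hp Mu (M₀ - 1) hN₀] at hDD
        exact hDD
      have hmats := comm_of_commute_nonscalar hA₀ns (hcent s hs).symm (hcent t ht).symm
      have hval : ∀ u v : ↥G, ((φ (u * v) : GL (Fin 2) (ZMod p)) : Matrix (Fin 2) (Fin 2) (ZMod p))
          = (((u : GL (Fin 2) (ZMod (p ^ 2))) : Matrix (Fin 2) (Fin 2) (ZMod (p ^ 2))).map (ff p))
            * (((v : GL (Fin 2) (ZMod (p ^ 2))) : Matrix (Fin 2) (Fin 2) (ZMod (p ^ 2))).map (ff p)) := by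
        intro u v
        show ((((u : GL (Fin 2) (ZMod (p ^ 2))) : Matrix (Fin 2) (Fin 2) (ZMod (p ^ 2)))
            * ((v : GL (Fin 2) (ZMod (p ^ 2))) : Matrix (Fin 2) (Fin 2) (ZMod (p ^ 2)))).map (ff p)) = _
        rw [Matrix.map_mul]
      have hphi : φ (s * t) = φ (t * s) := by
        apply Units.ext
        rw [hval s t, hval t s, hmats]
      have hmem : (s * t) * (t * s)⁻¹ ∈ φ.ker ⊓ (P : Subgroup ↥G) := by
        refine Subgroup.mem_inf.mpr ⟨?_, ?_⟩
        · rw [MonoidHom.mem_ker, _root_.map_mul, map_inv, hphi, mul_inv_cancel]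
        · exact mul_mem (mul_mem hs ht) (inv_mem (mul_mem ht hs))
      have : (s * t) * (t * s)⁻¹ = 1 := by
        have h := hdisj.le_bot hmem
        simpa [Subgroup.mem_bot] using h
      exact mul_inv_eq_one.mp this
  intro a ha b hb
  have hxy : (⟨a, ha⟩ : ↥G) * ⟨b, hb⟩ = ⟨b, hb⟩ * ⟨a, ha⟩ := by
    have hpi : ∀ u v : (∀ q : (Nat.card ↥G).primeFactors, ∀ P : Sylow q ↥G, (↑P : Subgroup ↥G)),
        u * v = v * u := by
      intro u v
      funext q P
      have hcomm := hcrux q (Nat.prime_of_mem_primeFactors q.2) P (u q P) (v q P)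
        (u q P).2 (v q P).2
      exact Subtype.ext hcomm
    calc (⟨a, ha⟩ : ↥G) * ⟨b, hb⟩
        = e (e.symm ⟨a, ha⟩) * e (e.symm ⟨b, hb⟩) := by
          rw [MulEquiv.apply_symm_apply, MulEquiv.apply_symm_apply]
      _ = e (e.symm ⟨a, ha⟩ * e.symm ⟨b, hb⟩) := (map_mul e _ _).symm
      _ = e (e.symm ⟨b, hb⟩ * e.symm ⟨a, ha⟩) := by rw [hpi]
      _ = e (e.symm ⟨b, hb⟩) * e (e.symm ⟨a, ha⟩) := map_mul e _ _
      _ = (⟨b, hb⟩ : ↥G) * ⟨a, ha⟩ := by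
          rw [MulEquiv.apply_symm_apply, MulEquiv.apply_symm_apply]
  have := congrArg Subtype.val hxy
  simpa using this
end scalarAux
end

section
/- Let p be a prime and let G be an admissible nilpotent subgroup of GL₂(ℤ/pℤ) (i.e., det(G) = (ℤ/pℤ)ˣ and G contains a matrix of determinant −1 and trace 0 fixing some nonzero vector of (ℤ/pℤ)²) such that p divides the order of G and G is contained in the group of upper triangular matrices. Then p = 2 and G is the subgroup of GL₂(ℤ/2ℤ) generated by the matrix [[1,1],[0,1]]. -/
open Matrix

def uGL (p : ℕ) (t : ZMod p) : GL (Fin 2) (ZMod p) :=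
  ⟨!![1, t; 0, 1], !![1, -t; 0, 1],
    by ext i j; fin_cases i <;> fin_cases j <;>
      simp [Matrix.mul_apply, Fin.sum_univ_two, Matrix.one_apply],
    by ext i j; fin_cases i <;> fin_cases j <;>
      simp [Matrix.mul_apply, Fin.sum_univ_two, Matrix.one_apply]⟩

@[simp] lemma uGL_val (p : ℕ) (t : ZMod p) :
    (uGL p t : Matrix (Fin 2) (Fin 2) (ZMod p)) = !![1, t; 0, 1] := rfl

lemma uGL_mul (p : ℕ) (a b : ZMod p) : uGL p a * uGL p b = uGL p (a + b) := by
  apply Units.ext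
  show (!![1, a; 0, 1] : Matrix (Fin 2) (Fin 2) (ZMod p)) * !![1, b; 0, 1] = _
  ext i j; fin_cases i <;> fin_cases j <;>
    simp [Matrix.mul_apply, Fin.sum_univ_two] <;> ring

lemma uGL_zero (p : ℕ) : uGL p 0 = 1 := by
  apply Units.ext
  show (!![1, (0:ZMod p); 0, 1]) = 1
  rw [Matrix.one_fin_two]

lemma uGL_inv (p : ℕ) (t : ZMod p) : (uGL p t)⁻¹ = uGL p (-t) := by
  apply inv_eq_of_mul_eq_one_right
  rw [uGL_mul, add_neg_cancel, uGL_zero]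

lemma uGL_pow (p : ℕ) (t : ZMod p) (k : ℕ) : (uGL p t) ^ k = uGL p (k * t) := by
  induction k with
  | zero => simp [uGL_zero]
  | succ n ih => rw [pow_succ, ih, uGL_mul]; push_cast; ring_nf

lemma tri_pow {R : Type*} [CommRing R] (A : Matrix (Fin 2) (Fin 2) R) (h : A 1 0 = 0) (n : ℕ) :
    (A ^ n) 1 0 = 0 ∧ (A ^ n) 0 0 = A 0 0 ^ n ∧ (A ^ n) 1 1 = A 1 1 ^ n := by
  induction n with
  | zero => simp [Matrix.one_apply]
  | succ n ih =>
    rw [pow_succ, pow_succ, pow_succ]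
    refine ⟨?_, ?_, ?_⟩ <;>
      simp [Matrix.mul_apply, Fin.sum_univ_two, ih.1, ih.2.1, ih.2.2, h]

lemma zmod2_ne_zero : ∀ a : ZMod 2, a ≠ 0 → a = 1 := by decide

lemma zmod2_cases : ∀ a : ZMod 2, a = 0 ∨ a = 1 := by decide


/-- Let `p` be a prime and `G` an admissible nilpotent subgroup of `GL₂(ℤ/pℤ)` (i.e.
`det(G) = (ℤ/pℤ)ˣ` and `G` contains a matrix of determinant `-1` and trace `0` fixing a
nonzero vector) such that `p` divides the order of `G` and `G` is contained in the group of
upper triangular matrices. Then `p = 2` and `G` is the subgroup generated by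
`[[1, 1], [0, 1]]`. -/
theorem nilpotent_admissible_borel_subgroup_GL2 (p : ℕ) (hp : p.Prime)
    (G : Subgroup (GL (Fin 2) (ZMod p)))
    (hnil : Group.IsNilpotent G)
    (hdet : ∀ u : (ZMod p)ˣ, ∃ g ∈ G, Matrix.GeneralLinearGroup.det g = u)
    (hadm : ∃ g ∈ G, (g : Matrix (Fin 2) (Fin 2) (ZMod p)).det = -1 ∧
      Matrix.trace (g : Matrix (Fin 2) (Fin 2) (ZMod p)) = 0 ∧
      ∃ v : Fin 2 → ZMod p, v ≠ 0 ∧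
        Matrix.mulVec (g : Matrix (Fin 2) (Fin 2) (ZMod p)) v = v)
    (hord : p ∣ Nat.card G)
    (htri : ∀ g ∈ G, (g : Matrix (Fin 2) (Fin 2) (ZMod p)) 1 0 = 0) :
    p = 2 ∧
      G = Subgroup.closure
        {g : GL (Fin 2) (ZMod p) |
          (g : Matrix (Fin 2) (Fin 2) (ZMod p)) = !![1, 1; 0, 1]} := by
  haveI := Fact.mk hp
  -- every element of G has invertible diagonal entries
  have hunit : ∀ g ∈ G, (g : Matrix (Fin 2) (Fin 2) (ZMod p)) 0 0 ≠ 0 ∧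
      (g : Matrix (Fin 2) (Fin 2) (ZMod p)) 1 1 ≠ 0 := by
    intro g hg
    have hdu : IsUnit (g : Matrix (Fin 2) (Fin 2) (ZMod p)).det :=
      (Matrix.isUnit_iff_isUnit_det _).mp g.isUnit
    rw [Matrix.det_fin_two, htri g hg, mul_zero, sub_zero] at hdu
    constructor
    · exact fun h => by simp [h] at hdu
    · exact fun h => by simp [h] at hdu
  -- Cauchy: an element of order p
  obtain ⟨x, hx⟩ := exists_prime_orderOf_dvd_card' (G := G) p hord
  -- its matrix is unipotent
  have hxp : ((x : GL (Fin 2) (ZMod p)) : Matrix (Fin 2) (Fin 2) (ZMod p)) ^ p = 1 := by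
    have hxo : x ^ p = 1 := by
      have h := pow_orderOf_eq_one x; rwa [hx] at h
    have h2 : ((x : GL (Fin 2) (ZMod p))) ^ p = 1 := by
      have := congrArg (Subgroup.subtype G) hxo
      simpa using this
    calc ((x : GL (Fin 2) (ZMod p)) : Matrix (Fin 2) (Fin 2) (ZMod p)) ^ p
        = (((x : GL (Fin 2) (ZMod p)) ^ p : GL (Fin 2) (ZMod p)) :
            Matrix (Fin 2) (Fin 2) (ZMod p)) := by rw [Units.val_pow_eq_pow_val]
      _ = 1 := by rw [h2]; rfl
  set M : Matrix (Fin 2) (Fin 2) (ZMod p) := ((x : GL (Fin 2) (ZMod p)) :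
    Matrix (Fin 2) (Fin 2) (ZMod p)) with hM
  have hM10 : M 1 0 = 0 := htri _ x.2
  obtain ⟨h1, h2, h3⟩ := tri_pow M hM10 p
  rw [hxp] at h1 h2 h3
  have ha : M 0 0 = 1 := by
    rw [← ZMod.pow_card (M 0 0), ← h2]; simp [Matrix.one_apply]
  have hd : M 1 1 = 1 := by
    rw [← ZMod.pow_card (M 1 1), ← h3]; simp [Matrix.one_apply]
  set b : ZMod p := M 0 1 with hb
  have hxu : (x : GL (Fin 2) (ZMod p)) = uGL p b := by
    apply Units.ext
    show M = _
    rw [Matrix.eta_fin_two M, ha, hd, hM10, uGL_val]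
  have hbne : b ≠ 0 := by
    intro h
    have : (x : GL (Fin 2) (ZMod p)) = 1 := by rw [hxu, h, uGL_zero]
    have hx1 : x = 1 := by
      apply Subtype.ext; exact this
    rw [hx1, orderOf_one] at hx
    exact hp.one_lt.ne' hx.symm
  -- all unipotents are in G
  have hU : ∀ t : ZMod p, uGL p t ∈ G := by
    intro t
    have hk : uGL p t = (x ^ (t * b⁻¹).val : G) := by
      have : ((x ^ (t * b⁻¹).val : G) : GL (Fin 2) (ZMod p)) =
          (x : GL (Fin 2) (ZMod p)) ^ (t * b⁻¹).val := by
        push_cast; rfl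
      rw [this, hxu, uGL_pow]
      congr 1
      rw [ZMod.natCast_val, ZMod.cast_id]
      field_simp
    rw [hk]; exact (x ^ (t * b⁻¹).val : G).2
  -- all elements of G have equal diagonal entries
  have hdiag : ∀ g ∈ G, (g : Matrix (Fin 2) (Fin 2) (ZMod p)) 0 0 =
      (g : Matrix (Fin 2) (Fin 2) (ZMod p)) 1 1 := by
    by_contra hcon
    push_neg at hcon
    obtain ⟨g, hg, hne⟩ := hcon
    set N : Matrix (Fin 2) (Fin 2) (ZMod p) := (g : Matrix (Fin 2) (Fin 2) (ZMod p)) with hN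
    obtain ⟨ha0, hd0⟩ := hunit g hg
    set r : ZMod p := N 0 0 / N 1 1 with hr
    have hr1 : 1 - r ≠ 0 := by
      intro h
      have : r = 1 := by linear_combination -h
      rw [hr, div_eq_one_iff_eq hd0] at this
      exact hne this
    -- the conjugation identity
    have key : ∀ s : ZMod p, uGL p s * g * (uGL p s)⁻¹ * g⁻¹ = uGL p (s * (1 - r)) := by
      intro s
      rw [uGL_inv, mul_inv_eq_iff_eq_mul]
      apply Units.ext
      show (!![1, s; 0, 1] : Matrix (Fin 2) (Fin 2) (ZMod p)) * N * !![1, -s; 0, 1] =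
        !![1, s * (1 - r); 0, 1] * N
      have hN10 : N 1 0 = 0 := by rw [hN]; exact htri g hg
      rw [Matrix.eta_fin_two N, hN10]
      ext i j
      fin_cases i <;> fin_cases j <;>
        simp [Matrix.mul_apply, Fin.sum_univ_two, hr] <;> field_simp [show N 1 1 ≠ 0 from hd0] <;> ring
    obtain ⟨n, hn⟩ := nilpotent_iff_lowerCentralSeries.mp hnil
    have hmem : ∀ n, ∀ t : ZMod p, (⟨uGL p t, hU t⟩ : G) ∈ Subgroup.lowerCentralSeries (⊤ : Subgroup G) n := by
      intro n
      induction n with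
      | zero => intro t; exact Subgroup.mem_top _
      | succ n ih =>
        intro t
        rw [Subgroup.lowerCentralSeries_succ, Subgroup.commutator_def]
        apply Subgroup.subset_closure
        refine ⟨⟨uGL p (t / (1 - r)), hU _⟩, ih _, ⟨g, hg⟩, Subgroup.mem_top _, ?_⟩
        rw [commutatorElement_def]; apply Subtype.ext
        push_cast
        rw [key (t / (1 - r)), div_mul_cancel₀ _ hr1]
    have := hn ▸ hmem n 1
    rw [Subgroup.mem_bot] at this
    have h1 : uGL p 1 = 1 := by
      have := congrArg (Subgroup.subtype G) this
      simpa using this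
    have := congrArg (fun u : GL (Fin 2) (ZMod p) =>
      (u : Matrix (Fin 2) (Fin 2) (ZMod p)) 0 1) h1
    simp [Matrix.one_apply] at this
  -- p = 2
  have hp2 : p = 2 := by
    by_contra hne2
    obtain ⟨c, hc⟩ := FiniteField.exists_nonsquare (F := ZMod p)
      (by rw [ZMod.ringChar_zmod_n]; exact hne2)
    have hc0 : c ≠ 0 := fun h => hc (h ▸ ⟨0, by ring⟩)
    obtain ⟨g, hg, hdg⟩ := hdet (Units.mk0 c hc0)
    have : (g : Matrix (Fin 2) (Fin 2) (ZMod p)).det = c := by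
      have := congrArg Units.val hdg
      rw [Matrix.GeneralLinearGroup.val_det_apply] at this
      simpa using this
    rw [Matrix.det_fin_two, htri g hg, mul_zero, sub_zero, hdiag g hg] at this
    exact hc ⟨_, this.symm⟩
  refine ⟨hp2, ?_⟩
  subst hp2
  apply le_antisymm
  · -- G ≤ closure
    intro g hg
    obtain ⟨ha0, hd0⟩ := hunit g hg
    have hA := Matrix.eta_fin_two (g : Matrix (Fin 2) (Fin 2) (ZMod 2))
    rw [htri g hg] at hA
    have ha1 : (g : Matrix (Fin 2) (Fin 2) (ZMod 2)) 0 0 = 1 := zmod2_ne_zero _ ha0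
    have hd1 : (g : Matrix (Fin 2) (Fin 2) (ZMod 2)) 1 1 = 1 := zmod2_ne_zero _ hd0
    rw [ha1, hd1] at hA
    have : (g : Matrix (Fin 2) (Fin 2) (ZMod 2)) 0 1 = 0 ∨
        (g : Matrix (Fin 2) (Fin 2) (ZMod 2)) 0 1 = 1 := by
      exact zmod2_cases _
    rcases this with h | h
    · have : g = 1 := by
        apply Units.ext
        rw [show ((1 : GL (Fin 2) (ZMod 2)) : Matrix (Fin 2) (Fin 2) (ZMod 2)) = 1 from rfl,
          Matrix.one_fin_two]
        rw [h] at hA; exact hA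
      rw [this]; exact Subgroup.one_mem _
    · apply Subgroup.subset_closure
      show (g : Matrix (Fin 2) (Fin 2) (ZMod 2)) = !![1, 1; 0, 1]
      rw [h] at hA; exact hA
  · -- closure ≤ G
    rw [Subgroup.closure_le]
    intro g hg
    have : g = uGL 2 1 := by
      apply Units.ext
      rw [uGL_val]; exact hg
    rw [this]; exact hU 1
end

section
/- Let p be a prime, let k ≥ 2 be an integer, and let φ, δ be integers. For a positive integer N, let C(N) be the set of invertible 2×2 matrices over ℤ/Nℤ of the form [[a + bφ, b],[δb, a]] with a, b ∈ ℤ/Nℤ (where φ, δ are reduced modulo N), i.e., those with a² + abφ − δb² a unit of ℤ/Nℤ. Then the cardinality of C(p^k) equals p^{2(k−1)} times the cardinality of C(p). -/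
open Matrix
open Function

/-- Counting a preimage under a surjective hom of additive commutative groups. -/
lemma card_preimage_addHom {G H : Type*} [AddCommGroup G] [AddCommGroup H]
    (f : G →+ H) (hf : Surjective f) (s : Set H) :
    Nat.card (f ⁻¹' s) = Nat.card s * Nat.card (f ⁻¹' ({0} : Set H)) := by
  have e : (f ⁻¹' s) ≃ s × (f ⁻¹' ({0} : Set H)) :=
  { toFun := fun x => (⟨f x, x.2⟩, ⟨(x : G) - surjInv hf (f x), by
      simp [Set.mem_preimage, surjInv_eq hf]⟩)
    invFun := fun q => ⟨surjInv hf q.1 + q.2, by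
      have h2 : f q.2 = 0 := q.2.2
      simp [Set.mem_preimage, surjInv_eq hf, h2, q.1.2]⟩
    left_inv := fun x => by
      ext
      simp
    right_inv := fun q => by
      have h2 : f (q.2 : G) = 0 := q.2.2
      ext
      · simp [surjInv_eq hf, h2]
      · simp [surjInv_eq hf, h2]
  }
  rw [Nat.card_congr e, Nat.card_prod]


/-- The level-`N` Cartan subgroup attached to integer parameters `φ, δ`: the set of
invertible `2×2` matrices over `ℤ/Nℤ` of the form `[[a + bφ, b], [δb, a]]`, i.e. those with
`a² + abφ - δb²` a unit of `ℤ/Nℤ`. -/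
def cartanSet (φ δ : ℤ) (N : ℕ) : Set (Matrix (Fin 2) (Fin 2) (ZMod N)) :=
  {A | ∃ a b : ZMod N,
    A = !![a + b * (φ : ZMod N), b; (δ : ZMod N) * b, a] ∧
      IsUnit (a ^ 2 + a * b * (φ : ZMod N) - (δ : ZMod N) * b ^ 2)}

/-- The pair set underlying the Cartan set. -/
def pairSet (φ δ : ℤ) (N : ℕ) : Set (ZMod N × ZMod N) :=
  {x | IsUnit (x.1 ^ 2 + x.1 * x.2 * (φ : ZMod N) - (δ : ZMod N) * x.2 ^ 2)}

lemma cartanSet_eq_image (φ δ : ℤ) (N : ℕ) :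
    cartanSet φ δ N =
      (fun x : ZMod N × ZMod N =>
        !![x.1 + x.2 * (φ : ZMod N), x.2; (δ : ZMod N) * x.2, x.1]) '' pairSet φ δ N := by
  ext A
  constructor
  · rintro ⟨a, b, rfl, h⟩
    exact ⟨(a, b), h, rfl⟩
  · rintro ⟨⟨a, b⟩, h, rfl⟩
    exact ⟨a, b, rfl, h⟩

lemma card_cartanSet_eq (φ δ : ℤ) (N : ℕ) :
    Nat.card (cartanSet φ δ N) = Nat.card (pairSet φ δ N) := by
  rw [cartanSet_eq_image]
  apply Nat.card_image_of_injective
  intro x y h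
  have h1 := congrFun (congrFun h 1) 1
  have h2 := congrFun (congrFun h 0) 1
  simp at h1 h2
  exact Prod.ext h1 h2

section ZModStuff

lemma castHom_pow_surjective (p k : ℕ) (hp : p.Prime) (hk0 : k ≠ 0) :
    Surjective (ZMod.castHom (dvd_pow_self p hk0) (ZMod p)) := by
  haveI : NeZero p := ⟨hp.pos.ne'⟩
  haveI : NeZero (p ^ k) := ⟨pow_ne_zero k hp.pos.ne'⟩
  intro x
  obtain ⟨m, rfl⟩ := ZMod.natCast_zmod_surjective x
  exact ⟨(m : ZMod (p ^ k)), by simp⟩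

lemma isUnit_iff_castHom (p k : ℕ) (hp : p.Prime) (hk0 : k ≠ 0) (x : ZMod (p ^ k)) :
    IsUnit x ↔ IsUnit (ZMod.castHom (dvd_pow_self p hk0) (ZMod p) x) := by
  haveI : NeZero (p ^ k) := ⟨pow_ne_zero k hp.pos.ne'⟩
  obtain ⟨m, rfl⟩ := ZMod.natCast_zmod_surjective x
  rw [map_natCast, ZMod.isUnit_iff_coprime, ZMod.isUnit_iff_coprime,
    Nat.coprime_pow_right_iff (Nat.pos_of_ne_zero hk0)]

lemma card_ker_castHom (p k : ℕ) (hp : p.Prime) (hk0 : k ≠ 0) :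
    Nat.card ((ZMod.castHom (dvd_pow_self p hk0) (ZMod p)) ⁻¹' ({0} : Set (ZMod p)))
      = p ^ (k - 1) := by
  have h := card_preimage_addHom
    ((ZMod.castHom (dvd_pow_self p hk0) (ZMod p)) : ZMod (p ^ k) →+* ZMod p).toAddMonoidHom
    (castHom_pow_surjective p k hp hk0) Set.univ
  simp only [Set.preimage_univ, Nat.card_univ, Nat.card_zmod, RingHom.toAddMonoidHom_eq_coe,
    RingHom.coe_coe] at h
  have h2 : p ^ k = p * p ^ (k - 1) := by
    rw [← pow_succ']
    congr 1
    omega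
  have h3 : p * p ^ (k - 1)
      = p * Nat.card ((ZMod.castHom (dvd_pow_self p hk0) (ZMod p)) ⁻¹' ({0} : Set (ZMod p))) := by
    rw [← h2]
    exact h
  exact (Nat.eq_of_mul_eq_mul_left hp.pos h3).symm

end ZModStuff
/-- For a prime `p` and `k ≥ 2`, the level-`p^k` Cartan subgroup has cardinality
`p^(2(k-1))` times that of the level-`p` Cartan subgroup. -/
theorem card_cartanSet_prime_pow (p : ℕ) (hp : p.Prime) (k : ℕ) (hk : 2 ≤ k) (φ δ : ℤ) :
    Nat.card (cartanSet φ δ (p ^ k)) = p ^ (2 * (k - 1)) * Nat.card (cartanSet φ δ p) := by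
  have hk0 : k ≠ 0 := by omega
  set π := ZMod.castHom (dvd_pow_self p hk0) (ZMod p) with hπ
  have hπs := castHom_pow_surjective p k hp hk0
  -- the product hom
  set F : (ZMod (p ^ k) × ZMod (p ^ k)) →+ (ZMod p × ZMod p) :=
    AddMonoidHom.prodMap π.toAddMonoidHom π.toAddMonoidHom with hF
  have hFs : Surjective F := fun y => by
    obtain ⟨a, ha⟩ := hπs y.1
    obtain ⟨b, hb⟩ := hπs y.2
    exact ⟨(a, b), by simp [hF, AddMonoidHom.prodMap, hπ, ha, hb]⟩
  have hpre : pairSet φ δ (p ^ k) = F ⁻¹' pairSet φ δ p := by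
    ext ⟨a, b⟩
    simp only [pairSet, Set.mem_setOf_eq, Set.mem_preimage, hF, AddMonoidHom.coe_prodMap,
      RingHom.toAddMonoidHom_eq_coe, RingHom.coe_coe, Prod.map]
    rw [isUnit_iff_castHom p k hp hk0]
    simp only [map_sub, map_add, _root_.map_mul, map_pow, map_intCast, hπ, RingHom.coe_coe]
    rfl
  have hker : Nat.card (F ⁻¹' ({0} : Set (ZMod p × ZMod p))) = p ^ (2 * (k - 1)) := by
    have : F ⁻¹' ({0} : Set (ZMod p × ZMod p))
        = (π ⁻¹' ({0} : Set (ZMod p))) ×ˢ (π ⁻¹' ({0} : Set (ZMod p))) := by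
      ext ⟨a, b⟩
      simp [hF, Prod.ext_iff]
    rw [this, Nat.card_congr (Equiv.Set.prod _ _), Nat.card_prod,
      card_ker_castHom p k hp hk0, ← pow_add]
    congr 1
    omega
  rw [card_cartanSet_eq, card_cartanSet_eq, hpre,
    card_preimage_addHom F hFs, hker, mul_comm]
end
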